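/- arXiv:2004.06714 — 6 statements merged into one kernel-verified Lean document; each statement's English description precedes it below -/
import Mathlib

section
/- Let O ⊆ ℝ^d be an open set and let S ⊆ O be compact. Then the inward filling infill_O S is a compact subset of O, and infill_O(infill_O S) = infill_O S. -/
open MeasureTheory Metric Set Filter
open scoped ENNReal Topology OnePoint

noncomputable section

/-- `d`-dimensional Euclidean space. -/
abbrev Euc (d : ℕ) : Type := EuclideanSpace ℝ (Fin d)

/-- A real-valued function is *harmonic on a set* if it is continuous there and satisfies
the mean value equality over every closed ball contained in the set. -/
def HarmOn {d : ℕ} (h : Euc d → ℝ) (O : Set (Euc d)) : Prop :=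
  ContinuousOn h O ∧
    ∀ x : Euc d, ∀ r : ℝ, 0 < r → closedBall x r ⊆ O →
      h x = ⨍ y in closedBall x r, h y ∂volume

/-- An `EReal`-valued function is *subharmonic on a set* if it is upper semicontinuous there,
nowhere `+∞` there, and on every closed ball contained in the set it is dominated by each
continuous function harmonic in the interior that dominates it on the boundary sphere. -/
def SbhOn {d : ℕ} (u : Euc d → EReal) (O : Set (Euc d)) : Prop :=
  UpperSemicontinuousOn u O ∧ (∀ x ∈ O, u x < ⊤) ∧
    ∀ x : Euc d, ∀ r : ℝ, 0 < r → closedBall x r ⊆ O →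
      ∀ h : Euc d → ℝ, ContinuousOn h (closedBall x r) → HarmOn h (ball x r) →
        (∀ y ∈ sphere x r, u y ≤ (h y : EReal)) →
        ∀ y ∈ closedBall x r, u y ≤ (h y : EReal)

/-- The positive part of an extended real number, as a member of `ℝ≥0∞`. -/
def erealPos (x : EReal) : ℝ≥0∞ := if x = ⊤ then ⊤ else ENNReal.ofReal x.toReal

/-- The integral of an `EReal`-valued function against a measure, with values in `EReal`:
the lower integral of the positive part minus the lower integral of the negative part. -/
def eInt {d : ℕ} (μ : Measure (Euc d)) (u : Euc d → EReal) : EReal :=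
  ((∫⁻ x, erealPos (u x) ∂μ : ℝ≥0∞) : EReal) -
    ((∫⁻ x, erealPos (-(u x)) ∂μ : ℝ≥0∞) : EReal)

/-- The (closed) support of a measure: points all of whose open neighbourhoods
have strictly positive measure. -/
def msupp {d : ℕ} (μ : Measure (Euc d)) : Set (Euc d) :=
  {x | ∀ U : Set (Euc d), IsOpen U → x ∈ U → 0 < μ U}

/-- A finite positive Borel measure whose support is a compact subset of `O`. -/
def MeasCompIn {d : ℕ} (μ : Measure (Euc d)) (O : Set (Euc d)) : Prop :=
  IsCompact (msupp μ) ∧ msupp μ ⊆ O ∧ μ (msupp μ)ᶜ = 0 ∧ μ Set.univ < ⊤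

/-- The *inward filling* of `S` with respect to `O`: the union of `S` with all connected
components of `O \ S` that are relatively compact in `O`. -/
def infill {X : Type*} [TopologicalSpace X] (O S : Set X) : Set X :=
  S ∪ {y | ∃ x ∈ O \ S, y ∈ connectedComponentIn (O \ S) x ∧
      IsCompact (closure (connectedComponentIn (O \ S) x)) ∧
      closure (connectedComponentIn (O \ S) x) ⊆ O}

lemma mem_infill_iff {X : Type*} [TopologicalSpace X] {O S : Set X} {y : X} :
    y ∈ infill O S ↔
    y ∈ S ∨ (y ∈ O \ S ∧ IsCompact (closure (connectedComponentIn (O \ S) y)) ∧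
      closure (connectedComponentIn (O \ S) y) ⊆ O) := by
  unfold infill
  constructor
  · rintro (h | ⟨x, hx, hy, hc, hsub⟩)
    · exact Or.inl h
    · right
      have hyU : y ∈ O \ S := connectedComponentIn_subset _ _ hy
      have heq := connectedComponentIn_eq hy
      rw [← heq]
      exact ⟨hyU, hc, hsub⟩
  · rintro (h | ⟨hy, hc, hsub⟩)
    · exact Or.inl h
    · exact Or.inr ⟨y, hy, mem_connectedComponentIn hy, hc, hsub⟩

lemma bound_on_closure {d : ℕ} {C : Set (Euc d)} (hC : IsOpen C) (hcc : IsCompact (closure C))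
    {g : Euc d → ℝ} (hg : Continuous g) {b : ℝ}
    (hfr : ∀ y ∈ frontier C, g y ≤ b)
    (hloc : ∀ p ∈ C, b < g p → ∀ ε : ℝ, 0 < ε → ∃ q, dist q p < ε ∧ g p < g q) :
    ∀ x ∈ closure C, g x ≤ b := by
  intro x hx
  by_contra hbx
  push_neg at hbx
  obtain ⟨p, hp, hpmax⟩ := hcc.exists_isMaxOn ⟨x, hx⟩ hg.continuousOn
  have hbp : b < g p := lt_of_lt_of_le hbx (hpmax hx)
  have hpC : p ∈ C := by
    by_contra h
    have hfrp : p ∈ frontier C := by rw [hC.frontier_eq]; exact ⟨hp, h⟩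
    exact absurd (hfr p hfrp) (not_le.2 hbp)
  obtain ⟨ε, hε, hball⟩ := Metric.isOpen_iff.1 hC p hpC
  obtain ⟨q, hq, hgq⟩ := hloc p hpC hbp ε hε
  have hqc : q ∈ closure C := subset_closure (hball (mem_ball.2 hq))
  exact absurd (hpmax hqc) (not_le.2 hgq)

lemma norm_no_local_max {d : ℕ} (p : Euc d) {b : ℝ} (hb : 0 < b) (hp : b < ‖p‖)
    (ε : ℝ) (hε : 0 < ε) : ∃ q : Euc d, dist q p < ε ∧ ‖p‖ < ‖q‖ := by
  have hpn : (0:ℝ) < ‖p‖ := hb.trans hp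
  set c : ℝ := ε / (2 * ‖p‖) with hc
  have hcpos : 0 < c := by positivity
  refine ⟨(1 + c) • p, ?_, ?_⟩
  · have h1 : (1 + c) • p - p = c • p := by module
    rw [dist_eq_norm, h1, norm_smul, Real.norm_eq_abs, abs_of_pos hcpos, hc]
    have h2 : ε / (2 * ‖p‖) * ‖p‖ = ε / 2 := by field_simp
    rw [h2]; linarith
  · rw [norm_smul, Real.norm_eq_abs, abs_of_pos (by linarith : (0:ℝ) < 1 + c)]
    nlinarith

lemma infDist_no_local_min {d : ℕ} {T : Set (Euc d)} (hT : T.Nonempty) (p : Euc d)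
    (hp : 0 < infDist p T) (ε : ℝ) (hε : 0 < ε) :
    ∃ q : Euc d, dist q p < ε ∧ infDist q T < infDist p T := by
  set D := infDist p T with hD
  set t := min (ε / 2) (D / 2) with ht
  have htpos : 0 < t := by positivity
  obtain ⟨z, hz, hdz⟩ := (infDist_lt_iff hT).1 (show infDist p T < D + t / 2 by linarith)
  have hdzD : D ≤ dist p z := infDist_le_dist_of_mem hz
  have hdzpos : 0 < dist p z := lt_of_lt_of_le hp hdzD
  have htlt : t < dist p z := by
    have : t ≤ D / 2 := min_le_right _ _
    linarith
  set s : ℝ := t / dist p z with hs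
  have hs0 : 0 < s := by positivity
  have hs1 : s < 1 := (div_lt_one hdzpos).2 htlt
  refine ⟨p + s • (z - p), ?_, ?_⟩
  · have h1 : p + s • (z - p) - p = s • (z - p) := by module
    rw [dist_eq_norm, h1, norm_smul, Real.norm_eq_abs, abs_of_pos hs0]
    have h2 : ‖z - p‖ = dist p z := by rw [dist_eq_norm, norm_sub_rev]
    rw [h2, hs, div_mul_cancel₀ _ (ne_of_gt hdzpos)]
    have : t ≤ ε / 2 := min_le_left _ _
    linarith
  · have hle : infDist (p + s • (z - p)) T ≤ dist (p + s • (z - p)) z :=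
      infDist_le_dist_of_mem hz
    have h1 : p + s • (z - p) - z = (1 - s) • (p - z) := by module
    have h2 : dist (p + s • (z - p)) z = (1 - s) * dist p z := by
      rw [dist_eq_norm, h1, norm_smul, Real.norm_eq_abs,
        abs_of_pos (by linarith : (0:ℝ) < 1 - s), ← dist_eq_norm]
    have h3 : (1 - s) * dist p z = dist p z - t := by
      rw [hs]; field_simp
    rw [h2, h3] at hle
    have hub : dist p z < D + t / 2 := hdz
    calc infDist (p + s • (z - p)) T ≤ dist p z - t := hle
      _ < D := by linarith
      _ = infDist p T := hD.symm

/-- For a compact subset `S` of an open set `O ⊆ ℝ^d`, the inward filling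
`infill O S` is a compact subset of `O`, and inward filling is idempotent. -/
theorem stmt_0 {d : ℕ} (O : Set (Euc d)) (hO : IsOpen O) (hOne : O.Nonempty)
    (S : Set (Euc d)) (hSO : S ⊆ O) (hS : IsCompact S) :
    IsCompact (infill O S) ∧ infill O S ⊆ O ∧ infill O (infill O S) = infill O S := by
  classical
  have hU : IsOpen (O \ S) := hO.sdiff hS.isClosed
  set U : Set (Euc d) := O \ S with hUdef
  set F : Set (Euc d) := infill O S with hFdef
  have hmemF : ∀ y : Euc d, y ∈ F ↔ y ∈ S ∨ (y ∈ U ∧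
      IsCompact (closure (connectedComponentIn U y)) ∧
      closure (connectedComponentIn U y) ⊆ O) := fun y => mem_infill_iff
  have hFO : F ⊆ O := by
    intro y hy
    rcases (hmemF y).1 hy with h | ⟨hyU, _⟩
    · exact hSO h
    · exact hyU.1
  -- points of the closure of a component that lie in U belong to the component
  have hclU : ∀ x ∈ U, ∀ y ∈ closure (connectedComponentIn U x), y ∈ U →
      y ∈ connectedComponentIn U x := by
    intro x hx y hyc hyU
    have hopen : IsOpen (connectedComponentIn U y) := hU.connectedComponentIn
    have hmem : y ∈ connectedComponentIn U y := mem_connectedComponentIn hyU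
    obtain ⟨z, hz1, hz2⟩ := mem_closure_iff.1 hyc _ hopen hmem
    have e1 := connectedComponentIn_eq hz1
    have e2 := connectedComponentIn_eq hz2
    rw [e2, ← e1]
    exact hmem
  -- frontier of a relatively compact component lies in S
  have hfrS : ∀ x ∈ U, closure (connectedComponentIn U x) ⊆ O →
      ∀ y ∈ frontier (connectedComponentIn U x), y ∈ S := by
    intro x hx hsub y hy
    have hCopen : IsOpen (connectedComponentIn U x) := hU.connectedComponentIn
    rw [hCopen.frontier_eq] at hy
    obtain ⟨hyc, hync⟩ := hy
    by_contra hyS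
    exact hync (hclU x hx y hyc ⟨hsub hyc, hyS⟩)
  -- a radius bound
  obtain ⟨r, hr⟩ := hS.isBounded.subset_closedBall 0
  set R : ℝ := max r 0 + 1 with hRdef
  have hR0 : (0:ℝ) < R := by positivity
  have hSball : ∀ y ∈ S, ‖y‖ ≤ R := by
    intro y hy
    have := mem_closedBall.1 (hr hy)
    rw [dist_zero_right] at this
    have : ‖y‖ ≤ max r 0 := le_trans this (le_max_left _ _)
    linarith
  have hFnorm : ∀ y ∈ F, ‖y‖ ≤ R := by
    intro y hy
    rcases (hmemF y).1 hy with h | ⟨hyU, hcc, hsub⟩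
    · exact hSball y h
    · have hCopen : IsOpen (connectedComponentIn U y) := hU.connectedComponentIn
      refine bound_on_closure hCopen hcc continuous_norm ?_ ?_ y
        (subset_closure (mem_connectedComponentIn hyU))
      · intro z hz
        exact hSball z (hfrS y hyU hsub z hz)
      · intro p _ hbp ε hε
        exact norm_no_local_max p hR0 hbp ε hε
  -- a compact set of O containing F
  obtain ⟨K, hKc, hKO, hFK⟩ : ∃ K : Set (Euc d), IsCompact K ∧ K ⊆ O ∧ F ⊆ K := by
    by_cases hOc : Oᶜ.Nonempty
    · obtain ⟨δ, hδ, hth⟩ := hS.exists_thickening_subset_open hO hSO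
      have hSdist : ∀ y ∈ S, δ ≤ infDist y Oᶜ := by
        intro y hy
        by_contra h
        push_neg at h
        obtain ⟨z, hz, hdz⟩ := (infDist_lt_iff hOc).1 h
        have hzth : z ∈ thickening δ S := by
          rw [mem_thickening_iff]
          exact ⟨y, hy, by rwa [dist_comm]⟩
        exact hz (hth hzth)
      have hFdist : ∀ y ∈ F, δ ≤ infDist y Oᶜ := by
        intro y hy
        rcases (hmemF y).1 hy with h | ⟨hyU, hcc, hsub⟩
        · exact hSdist y h
        · have hCopen : IsOpen (connectedComponentIn U y) := hU.connectedComponentIn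
          have hbound := bound_on_closure hCopen hcc
            ((continuous_infDist_pt (Oᶜ)).neg) (g := fun x => -infDist x Oᶜ) (b := -δ)
            (fun z hz => by
              have := hSdist z (hfrS y hyU hsub z hz)
              simp only [neg_le_neg_iff]
              linarith)
            (fun p hp hbp ε hε => by
              have hpU : p ∈ U := connectedComponentIn_subset _ _ hp
              have hppos : 0 < infDist p Oᶜ :=
                (hO.isClosed_compl.notMem_iff_infDist_pos hOc).1 (by simp [hpU.1])
              obtain ⟨q, hq1, hq2⟩ := infDist_no_local_min hOc p hppos ε hε
              exact ⟨q, hq1, by simpa using hq2⟩)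
            y (subset_closure (mem_connectedComponentIn hyU))
          simpa using hbound
      refine ⟨closedBall 0 R ∩ {x | δ ≤ infDist x Oᶜ}, ?_, ?_, ?_⟩
      · exact (isCompact_closedBall 0 R).inter_right
          (isClosed_le continuous_const (continuous_infDist_pt _))
      · intro x hx
        by_contra hxO
        have : infDist x Oᶜ = 0 := infDist_zero_of_mem hxO
        have := hx.2
        simp only [mem_setOf_eq] at this
        linarith
      · intro y hy
        exact ⟨mem_closedBall_zero_iff.2 (hFnorm y hy), hFdist y hy⟩
    · have hOuniv : O = univ := compl_empty_iff.1 (not_nonempty_iff_eq_empty.1 hOc)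
      refine ⟨closedBall 0 R, isCompact_closedBall 0 R, by rw [hOuniv]; exact subset_univ _, ?_⟩
      intro y hy
      exact mem_closedBall_zero_iff.2 (hFnorm y hy)
  -- F is closed
  have hFclosed : IsClosed F := by
    apply isClosed_of_closure_subset
    intro x hx
    have hxK : x ∈ K := closure_minimal hFK hKc.isClosed hx
    have hxO : x ∈ O := hKO hxK
    by_cases hxS : x ∈ S
    · exact (hmemF x).2 (Or.inl hxS)
    · have hxU : x ∈ U := ⟨hxO, hxS⟩
      have hCopen : IsOpen (connectedComponentIn U x) := hU.connectedComponentIn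
      obtain ⟨z, hzC, hzF⟩ := mem_closure_iff.1 hx _ hCopen (mem_connectedComponentIn hxU)
      rcases (hmemF z).1 hzF with hzS | ⟨hzU, hcc, hsub⟩
      · exact absurd hzS (connectedComponentIn_subset U x hzC).2
      · have e : connectedComponentIn U x = connectedComponentIn U z := connectedComponentIn_eq hzC
        exact (hmemF x).2 (Or.inr ⟨hxU, by rw [e]; exact hcc, by rw [e]; exact hsub⟩)
  have hFcompact : IsCompact F := hKc.of_isClosed_subset hFclosed hFK
  -- idempotence
  have hidem : infill O F = F := by
    apply Subset.antisymm _ subset_union_left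
    intro y hy
    rcases (mem_infill_iff (O := O) (S := F)).1 hy with h | ⟨hyOF, hcc, hsub⟩
    · exact h
    · exfalso
      obtain ⟨hyO, hyF⟩ := hyOF
      have hyS : y ∉ S := fun h => hyF ((hmemF y).2 (Or.inl h))
      have hyU : y ∈ U := ⟨hyO, hyS⟩
      have hbad : ¬ (IsCompact (closure (connectedComponentIn U y)) ∧
          closure (connectedComponentIn U y) ⊆ O) := by
        intro hgood
        exact hyF ((hmemF y).2 (Or.inr ⟨hyU, hgood.1, hgood.2⟩))
      have hsubOF : connectedComponentIn U y ⊆ O \ F := by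
        intro z hz
        have hzU : z ∈ U := connectedComponentIn_subset _ _ hz
        refine ⟨hzU.1, fun hzF => ?_⟩
        rcases (hmemF z).1 hzF with hzS | ⟨_, hcc', hsub'⟩
        · exact hzU.2 hzS
        · have e : connectedComponentIn U y = connectedComponentIn U z := connectedComponentIn_eq hz
          exact hbad ⟨by rw [e]; exact hcc', by rw [e]; exact hsub'⟩
      have hOFU : O \ F ⊆ U := fun z hz => ⟨hz.1, fun hzS => hz.2 ((hmemF z).2 (Or.inl hzS))⟩
      have e1 : connectedComponentIn (O \ F) y = connectedComponentIn U y := by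
        apply Subset.antisymm
        · exact isPreconnected_connectedComponentIn.subset_connectedComponentIn
            (mem_connectedComponentIn ⟨hyO, hyF⟩) ((connectedComponentIn_subset _ _).trans hOFU)
        · exact isPreconnected_connectedComponentIn.subset_connectedComponentIn
            (mem_connectedComponentIn hyU) hsubOF
      rw [e1] at hcc hsub
      exact hbad ⟨hcc, hsub⟩
  exact ⟨hFcompact, hFO, hidem⟩
end
end

section
/- Let O ⊆ ℝ^d be an open set and let S ⊆ O be compact. Then the inward filling infill_O S coincides with the complement in O_∞ of the connected component of O_∞∖S containing the point ∞; moreover, O_∞∖infill_O S is connected and locally connected. -/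
open MeasureTheory Metric Set Filter
open scoped ENNReal Topology OnePoint

noncomputable section

/-- The copy of a subset `S ⊆ O` inside the one-point (Alexandroff) compactification
`O_∞ = OnePoint ↥O` of `O`. -/
def inOnePoint {X : Type*} (O S : Set X) : Set (OnePoint ↥O) :=
  OnePoint.some '' {x : ↥O | (x : X) ∈ S}

namespace Stmt1Aux

variable {d : ℕ} {O S : Set (Euc d)}

theorem cc_closure_mem (hO : IsOpen O) (hS : IsClosed S) {x z : Euc d}
    (hz : z ∈ closure (connectedComponentIn (O \ S) x)) (hzOS : z ∈ O \ S) :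
    z ∈ connectedComponentIn (O \ S) x := by
  have hF : IsOpen (O \ S) := hO.sdiff hS
  obtain ⟨W, hWF, hWo, hzW, hWc⟩ :=
    locallyConnectedSpace_iff_subsets_isOpen_isConnected.mp inferInstance z (O \ S)
      (hF.mem_nhds hzOS)
  obtain ⟨w, hwW, hwC⟩ := mem_closure_iff.mp hz W hWo hzW
  have hunion : IsPreconnected (W ∪ connectedComponentIn (O \ S) x) :=
    IsPreconnected.union w hwW hwC hWc.isPreconnected isPreconnected_connectedComponentIn
  have hsub : W ∪ connectedComponentIn (O \ S) x ⊆ O \ S :=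
    union_subset hWF (connectedComponentIn_subset _ _)
  have h2 := hunion.subset_connectedComponentIn (Or.inl hwW) hsub
  rw [connectedComponentIn_eq hwC]
  exact h2 (Or.inl hzW)

theorem cc_maximal (hO : IsOpen O) (hS : IsClosed S) {x : Euc d}
    (hcl : closure (connectedComponentIn (O \ S) x) ⊆ O) {P : Set (Euc d)}
    (hP : IsPreconnected P) (hPS : P ⊆ Sᶜ)
    (hne : (P ∩ connectedComponentIn (O \ S) x).Nonempty) :
    P ⊆ connectedComponentIn (O \ S) x := by
  set C := connectedComponentIn (O \ S) x with hC
  have hCo : IsOpen C := (hO.sdiff hS).connectedComponentIn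
  have hDo : IsOpen (Sᶜ ∩ (closure C)ᶜ) := hS.isOpen_compl.inter isClosed_closure.isOpen_compl
  have hdisj : Disjoint C (Sᶜ ∩ (closure C)ᶜ) :=
    disjoint_left.mpr fun a haC ha2 => ha2.2 (subset_closure haC)
  have hsub : P ⊆ C ∪ (Sᶜ ∩ (closure C)ᶜ) := by
    intro p hp
    by_cases h : p ∈ C
    · exact Or.inl h
    · refine Or.inr ⟨hPS hp, fun hcl' => h ?_⟩
      exact cc_closure_mem hO hS hcl' ⟨hcl hcl', hPS hp⟩
  exact hP.subset_left_of_subset_union hCo hDo hdisj hsub hne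

theorem infill_subset (hSO : S ⊆ O) : infill O S ⊆ O := by
  rintro y (hy | ⟨x, _, hyC, _, _⟩)
  · exact hSO hy
  · exact (connectedComponentIn_subset _ _ hyC).1

theorem isCompact_infill (hO : IsOpen O) (hSO : S ⊆ O) (hS : IsCompact S) :
    IsCompact (infill O S) := by
  obtain ⟨R₀, hR₀⟩ := hS.isBounded.subset_closedBall 0
  set R := max R₀ 0 with hRdef
  have hR : S ⊆ closedBall 0 R := hR₀.trans (closedBall_subset_closedBall (le_max_left _ _))
  have hRnn : (0:ℝ) ≤ R := le_max_right _ _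
  -- every relatively compact component is inside closedBall 0 R
  have hcomp : ∀ x : Euc d, IsCompact (closure (connectedComponentIn (O \ S) x)) →
      closure (connectedComponentIn (O \ S) x) ⊆ O →
      connectedComponentIn (O \ S) x ⊆ closedBall 0 R := by
    intro x hcpt hclO p hpC
    by_contra hpB
    have hpR : R < ‖p‖ := by
      have := mem_closedBall.not.mp hpB
      rwa [dist_zero_right, not_le] at this
    have hppos : (0:ℝ) < ‖p‖ := lt_of_le_of_lt hRnn hpR
    set Ray : Set (Euc d) := (fun t : ℝ => (1 + t) • p) '' Ici 0 with hRay
    have hnorm : ∀ t : ℝ, 0 ≤ t → ‖(1 + t) • p‖ = (1 + t) * ‖p‖ := by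
      intro t ht
      rw [norm_smul, Real.norm_eq_abs, abs_of_nonneg (by linarith)]
    have hRayS : Ray ⊆ Sᶜ := by
      rintro _ ⟨t, ht, rfl⟩ hmem
      have h1 : dist ((1 + t) • p) 0 ≤ R := mem_closedBall.mp (hR hmem)
      have ht' : (0:ℝ) ≤ t := ht
      rw [dist_zero_right, hnorm t ht'] at h1
      nlinarith
    have hRayP : IsPreconnected Ray :=
      isPreconnected_Ici.image _ (Continuous.continuousOn (by continuity))
    have hpRay : p ∈ Ray := ⟨0, mem_Ici.mpr le_rfl, by simp⟩
    have hRaysub := cc_maximal hO hS.isClosed hclO hRayP hRayS ⟨p, hpRay, hpC⟩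
    obtain ⟨R2, hR2⟩ := (hcpt.isBounded.subset (subset_closure)).subset_closedBall 0
    have hR2nn : 0 ≤ R2 := by
      have := mem_closedBall.mp (hR2 hpC)
      rw [dist_zero_right] at this; linarith
    have hmem2 : (1 + R2 / ‖p‖) • p ∈ connectedComponentIn (O \ S) x :=
      hRaysub ⟨R2 / ‖p‖, mem_Ici.mpr (div_nonneg hR2nn hppos.le), rfl⟩
    have := mem_closedBall.mp (hR2 hmem2)
    rw [dist_zero_right, hnorm _ (div_nonneg hR2nn hppos.le)] at this
    rw [add_mul, one_mul, div_mul_cancel₀ _ hppos.ne'] at this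
    linarith
  have hbdd : infill O S ⊆ closedBall 0 R := by
    rintro y (hy | ⟨x, hx, hyC, hcpt, hclO⟩)
    · exact hR hy
    · exact hcomp x hcpt hclO hyC
  have hclosed : IsClosed (infill O S) := by
    rw [← closure_subset_iff_isClosed]
    intro q hq
    by_cases hqS : q ∈ S
    · exact Or.inl hqS
    · obtain ⟨ε, hε, hball⟩ := Metric.isOpen_iff.mp hS.isClosed.isOpen_compl q hqS
      obtain ⟨y, hyb, hyI⟩ := mem_closure_iff.mp hq (ball q ε) isOpen_ball (mem_ball_self hε)
      rcases hyI with hyS | ⟨x, hx, hyC, hcpt, hclO⟩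
      · exact absurd hyS (hball hyb)
      · exact Or.inr ⟨x, hx,
          cc_maximal hO hS.isClosed hclO (convex_ball q ε).isPreconnected hball
            ⟨y, hyb, hyC⟩ (mem_ball_self hε), hcpt, hclO⟩
  exact (isCompact_closedBall 0 R).of_isClosed_subset hclosed hbdd

theorem cc_diff_infill (hO : IsOpen O) (hSO : S ⊆ O) (hS : IsCompact S) {z : Euc d}
    (hz : z ∈ O \ infill O S) :
    connectedComponentIn (O \ infill O S) z = connectedComponentIn (O \ S) z ∧
      ¬(IsCompact (closure (connectedComponentIn (O \ S) z)) ∧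
        closure (connectedComponentIn (O \ S) z) ⊆ O) := by
  have hzS : z ∈ O \ S := ⟨hz.1, fun h => hz.2 (Or.inl h)⟩
  have hnot : ¬(IsCompact (closure (connectedComponentIn (O \ S) z)) ∧
      closure (connectedComponentIn (O \ S) z) ⊆ O) := by
    rintro ⟨h1, h2⟩
    exact hz.2 (Or.inr ⟨z, hzS, mem_connectedComponentIn hzS, h1, h2⟩)
  have hDsub : connectedComponentIn (O \ S) z ⊆ O \ infill O S := by
    intro w hw
    have hwOS := connectedComponentIn_subset _ _ hw
    refine ⟨hwOS.1, ?_⟩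
    rintro (hwS | ⟨x, hx, hwC, hcpt, hclO⟩)
    · exact hwOS.2 hwS
    · have h1 : connectedComponentIn (O \ S) z = connectedComponentIn (O \ S) w :=
        connectedComponentIn_eq hw
      have h2 : connectedComponentIn (O \ S) x = connectedComponentIn (O \ S) w :=
        connectedComponentIn_eq hwC
      exact hnot (by rw [h1, ← h2]; exact ⟨hcpt, hclO⟩)
  refine ⟨subset_antisymm ?_ ?_, hnot⟩
  · exact connectedComponentIn_mono z (diff_subset_diff_right fun a ha => Or.inl ha)
  · exact isPreconnected_connectedComponentIn.subset_connectedComponentIn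
      (mem_connectedComponentIn hzS) hDsub


theorem mem_inOnePoint_coe {T : Set (Euc d)} {y : ↥O} :
    (OnePoint.some y : OnePoint ↥O) ∈ inOnePoint O T ↔ (y : Euc d) ∈ T := by
  constructor
  · rintro ⟨w, hw, hwy⟩
    cases OnePoint.coe_injective hwy
    exact hw
  · intro h; exact ⟨y, h, rfl⟩

theorem infty_notMem_inOnePoint (T : Set (Euc d)) :
    (OnePoint.infty : OnePoint ↥O) ∉ inOnePoint O T :=
  OnePoint.infty_notMem_image_coe

theorem isOpen_inOnePoint {T : Set (Euc d)} (hT : IsOpen T) : IsOpen (inOnePoint O T) :=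
  OnePoint.isOpen_image_coe.mpr (hT.preimage continuous_subtype_val)

theorem isCompact_preimage_val {T : Set (Euc d)} (hT : IsCompact T) (hTO : T ⊆ O) :
    IsCompact {x : ↥O | (x : Euc d) ∈ T} := by
  rw [Subtype.isCompact_iff]
  have : Subtype.val '' {x : ↥O | (x : Euc d) ∈ T} = T := by
    rw [show {x : ↥O | (x : Euc d) ∈ T} = Subtype.val ⁻¹' T from rfl,
      Set.image_preimage_eq_inter_range, Subtype.range_coe, inter_eq_left]
    exact hTO
  rwa [this]

theorem isCompact_inOnePoint {T : Set (Euc d)} (hT : IsCompact T) (hTO : T ⊆ O) :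
    IsCompact (inOnePoint O T) :=
  (isCompact_preimage_val hT hTO).image OnePoint.continuous_coe

theorem isPreconnected_inOnePoint {T : Set (Euc d)} (hT : IsPreconnected T) (hTO : T ⊆ O) :
    IsPreconnected (inOnePoint O T) := by
  have h1 : IsPreconnected {x : ↥O | (x : Euc d) ∈ T} := by
    apply Topology.IsInducing.subtypeVal.isPreconnected_image.mp
    have : Subtype.val '' {x : ↥O | (x : Euc d) ∈ T} = T := by
      rw [show {x : ↥O | (x : Euc d) ∈ T} = Subtype.val ⁻¹' T from rfl,
        Set.image_preimage_eq_inter_range, Subtype.range_coe, inter_eq_left]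
      exact hTO
    rwa [this]
  exact h1.image _ OnePoint.continuous_coe.continuousOn

theorem preconn_insert_infty {T : Set (Euc d)} (hTO : T ⊆ O)
    (hT : IsPreconnected T)
    (hnc : ¬(IsCompact (closure T) ∧ closure T ⊆ O)) :
    (OnePoint.infty : OnePoint ↥O) ∈ closure (inOnePoint O T) ∧
    IsPreconnected (insert (OnePoint.infty : OnePoint ↥O) (inOnePoint O T)) := by
  have hinf : (OnePoint.infty : OnePoint ↥O) ∈ closure (inOnePoint O T) := by
    by_contra hni
    have hcl : IsCompact (closure (inOnePoint O T)) := isClosed_closure.isCompact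
    set Q : Set ↥O := OnePoint.some ⁻¹' closure (inOnePoint O T) with hQdef
    have himg : OnePoint.some '' Q = closure (inOnePoint O T) := by
      rw [hQdef, Set.image_preimage_eq_inter_range, inter_eq_left]
      intro p hp
      by_contra hpr
      exact hni (OnePoint.notMem_range_coe_iff.mp hpr ▸ hp)
    have hQ : IsCompact Q := by
      rw [OnePoint.isOpenEmbedding_coe.isEmbedding.isCompact_iff, himg]
      exact hcl
    have hM : IsCompact (Subtype.val '' Q) := hQ.image continuous_subtype_val
    have hTM : T ⊆ Subtype.val '' Q := by
      intro z hz
      exact ⟨⟨z, hTO hz⟩, subset_closure (⟨⟨z, hTO hz⟩, hz, rfl⟩ :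
        (OnePoint.some (⟨z, hTO hz⟩ : ↥O)) ∈ inOnePoint O T), rfl⟩
    have hclM : closure T ⊆ Subtype.val '' Q := hM.isClosed.closure_subset_iff.mpr hTM
    refine hnc ⟨hM.of_isClosed_subset isClosed_closure hclM, hclM.trans ?_⟩
    rintro _ ⟨q, _, rfl⟩
    exact q.2
  refine ⟨hinf, ?_⟩
  have hTne : T.Nonempty := by
    rcases T.eq_empty_or_nonempty with rfl | h
    · exact absurd ⟨by simp, by simp⟩ hnc
    · exact h
  exact (isPreconnected_inOnePoint hT hTO).subset_closure (subset_insert _ _)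
    (insert_subset hinf subset_closure)

theorem locallyConnected_subtype {X : Type*} [TopologicalSpace X] {K : Set X}
    (h : ∀ x ∈ K, ∀ U ∈ 𝓝[K] x, ∃ V ∈ 𝓝[K] x, V ⊆ U ∧ V ⊆ K ∧ IsPreconnected V) :
    LocallyConnectedSpace ↥K := by
  rw [locallyConnectedSpace_iff_connected_subsets]
  intro x U hU
  rw [nhds_subtype_eq_comap_nhdsWithin] at hU
  obtain ⟨t, ht, hts⟩ := mem_comap.mp hU
  obtain ⟨V, hV, hVt, hVK, hVc⟩ := h (x : X) x.2 t ht
  refine ⟨Subtype.val ⁻¹' V, ?_, ?_, fun z hz => hts (hVt hz)⟩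
  · rw [nhds_subtype_eq_comap_nhdsWithin]
    exact mem_comap.mpr ⟨V, hV, le_refl _⟩
  · have himg : Subtype.val '' (Subtype.val ⁻¹' V : Set ↥K) = V := by
      rw [Set.image_preimage_eq_inter_range, Subtype.range_coe, inter_eq_left]
      exact hVK
    apply Topology.IsInducing.subtypeVal.isPreconnected_image.mp
    rwa [himg]

theorem onePoint_cases {X : Type*} (p : OnePoint X) :
    p = OnePoint.infty ∨ ∃ y : X, p = OnePoint.some y := by
  cases p with
  | infty => exact Or.inl rfl
  | coe y => exact Or.inr ⟨y, rfl⟩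


end Stmt1Aux

open Stmt1Aux in
/-- For a compact subset `S` of an open set `O ⊆ ℝ^d`, the inward filling
`infill O S`, viewed inside the one-point compactification `O_∞` of `O`, coincides with the
complement of the connected component of `O_∞ \ S` containing the point `∞`; moreover
`O_∞ \ infill O S` is connected and locally connected. -/
theorem stmt_1 {d : ℕ} (O : Set (Euc d)) (hO : IsOpen O) (hOne : O.Nonempty)
    (S : Set (Euc d)) (hSO : S ⊆ O) (hS : IsCompact S) :
    inOnePoint O (infill O S) =
      (connectedComponentIn ((inOnePoint O S)ᶜ) (OnePoint.infty : OnePoint ↥O))ᶜ ∧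
    IsConnected ((inOnePoint O (infill O S))ᶜ) ∧
    LocallyConnectedSpace ((inOnePoint O (infill O S))ᶜ : Set (OnePoint ↥O)) := by
  classical
  haveI : LocallyCompactSpace ↥O := hO.isOpenEmbedding_subtypeVal.locallyCompactSpace
  haveI : NormalSpace (OnePoint ↥O) := inferInstance
  haveI : T2Space (OnePoint ↥O) := inferInstance
  have hScl : IsClosed S := hS.isClosed
  have hOS : IsOpen (O \ S) := hO.sdiff hScl
  set U : Set (OnePoint ↥O) := (inOnePoint O S)ᶜ with hUdef
  have hUopen : IsOpen U := (isCompact_inOnePoint hS hSO).isClosed.isOpen_compl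
  have hinftyU : (OnePoint.infty : OnePoint ↥O) ∈ U := infty_notMem_inOnePoint S
  set K := connectedComponentIn U (OnePoint.infty : OnePoint ↥O) with hKdef
  have hKU : K ⊆ U := connectedComponentIn_subset _ _
  have hinfK : (OnePoint.infty : OnePoint ↥O) ∈ K := mem_connectedComponentIn hinftyU
  -- non-relatively-compact components embed into K
  have hKmem : ∀ y : ↥O, (y : Euc d) ∈ O \ S →
      ¬(IsCompact (closure (connectedComponentIn (O \ S) (y : Euc d))) ∧
        closure (connectedComponentIn (O \ S) (y : Euc d)) ⊆ O) →
      OnePoint.some y ∈ K := by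
    intro y hy hnc
    have hCO : connectedComponentIn (O \ S) (y : Euc d) ⊆ O :=
      (connectedComponentIn_subset _ _).trans diff_subset
    obtain ⟨hinfcl, hpc⟩ := preconn_insert_infty hCO isPreconnected_connectedComponentIn hnc
    have hsubU : insert (OnePoint.infty : OnePoint ↥O)
        (inOnePoint O (connectedComponentIn (O \ S) (y : Euc d))) ⊆ U := by
      rintro p (rfl | ⟨w, hw, rfl⟩)
      · exact hinftyU
      · intro hpS
        exact (connectedComponentIn_subset _ _ hw).2 (mem_inOnePoint_coe.mp hpS)
    exact hpc.subset_connectedComponentIn (mem_insert _ _) hsubU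
      (mem_insert_of_mem _ (mem_inOnePoint_coe.mpr (mem_connectedComponentIn hy)))
  -- relatively compact components are disjoint from K
  have hKdisj : ∀ x : Euc d, x ∈ O \ S →
      IsCompact (closure (connectedComponentIn (O \ S) x)) →
      closure (connectedComponentIn (O \ S) x) ⊆ O →
      ∀ y : ↥O, (y : Euc d) ∈ connectedComponentIn (O \ S) x → OnePoint.some y ∉ K := by
    intro x hx hcpt hclO y hyC hyK
    have hCo : IsOpen (inOnePoint O (connectedComponentIn (O \ S) x)) :=
      isOpen_inOnePoint hOS.connectedComponentIn
    have hclCsub : closure (inOnePoint O (connectedComponentIn (O \ S) x)) ∩ U ⊆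
        inOnePoint O (connectedComponentIn (O \ S) x) := by
      rintro p ⟨hp1, hp2⟩
      have hpcl : p ∈ inOnePoint O (closure (connectedComponentIn (O \ S) x)) := by
        have hcc : IsCompact (inOnePoint O (closure (connectedComponentIn (O \ S) x))) :=
          isCompact_inOnePoint hcpt hclO
        refine hcc.isClosed.closure_subset_iff.mpr ?_ hp1
        rintro q ⟨w, hw, rfl⟩
        exact ⟨w, subset_closure hw, rfl⟩
      obtain ⟨w, hw, rfl⟩ := hpcl
      have hwS : (w : Euc d) ∉ S := fun h => hp2 ⟨w, h, rfl⟩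
      exact ⟨w, cc_closure_mem hO hScl hw ⟨w.2, hwS⟩, rfl⟩
    have hD2 : IsOpen (U \ inOnePoint O (connectedComponentIn (O \ S) x)) := by
      have heq2 : U \ inOnePoint O (connectedComponentIn (O \ S) x) =
          U ∩ (closure (inOnePoint O (connectedComponentIn (O \ S) x)))ᶜ := by
        apply Subset.antisymm
        · rintro p ⟨hpU, hpC⟩
          exact ⟨hpU, fun hcl => hpC (hclCsub ⟨hcl, hpU⟩)⟩
        · rintro p ⟨hpU, hpc⟩
          exact ⟨hpU, fun h => hpc (subset_closure h)⟩
      rw [heq2]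
      exact hUopen.inter isClosed_closure.isOpen_compl
    have hKsub : K ⊆ inOnePoint O (connectedComponentIn (O \ S) x) :=
      isPreconnected_connectedComponentIn.subset_left_of_subset_union hCo hD2
        (disjoint_left.mpr fun a ha hb => hb.2 ha)
        (fun p hp => by
          by_cases h : p ∈ inOnePoint O (connectedComponentIn (O \ S) x)
          exacts [Or.inl h, Or.inr ⟨hKU hp, h⟩])
        ⟨OnePoint.some y, hyK, ⟨y, hyC, rfl⟩⟩
    exact infty_notMem_inOnePoint _ (hKsub hinfK)
  -- the main identification
  have hmain : inOnePoint O (infill O S) = Kᶜ := by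
    ext p
    rcases onePoint_cases p with rfl | ⟨y, rfl⟩
    · exact iff_of_false (infty_notMem_inOnePoint _) (fun h => h hinfK)
    · rw [mem_compl_iff, mem_inOnePoint_coe]
      constructor
      · rintro (hyS | ⟨x, hx, hyC, hcpt, hclO⟩)
        · exact fun hK => (hKU hK) (mem_inOnePoint_coe.mpr hyS)
        · exact hKdisj x hx hcpt hclO y hyC
      · intro hnK
        by_contra hni
        have hyOS : (y : Euc d) ∈ O \ S := ⟨y.2, fun h => hni (Or.inl h)⟩
        refine hnK (hKmem y hyOS ?_)
        rintro ⟨h1, h2⟩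
        exact hni (Or.inr ⟨(y : Euc d), hyOS, mem_connectedComponentIn hyOS, h1, h2⟩)
  have hA : IsOpen (O \ infill O S) := hO.sdiff (isCompact_infill hO hSO hS).isClosed
  have hKeq : K = insert (OnePoint.infty : OnePoint ↥O) (inOnePoint O (O \ infill O S)) := by
    have h2 : K = (inOnePoint O (infill O S))ᶜ := by rw [hmain, compl_compl]
    rw [h2]
    ext p
    rcases onePoint_cases p with rfl | ⟨y, rfl⟩
    · exact iff_of_true (infty_notMem_inOnePoint _) (mem_insert _ _)
    · rw [mem_compl_iff, mem_inOnePoint_coe]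
      constructor
      · intro h
        exact mem_insert_of_mem _ (mem_inOnePoint_coe.mpr ⟨y.2, h⟩)
      · rintro (h | h)
        · exact absurd h (OnePoint.coe_ne_infty y)
        · exact (mem_inOnePoint_coe.mp h).2
  refine ⟨hmain, ?_, ?_⟩
  · rw [hmain, compl_compl]
    exact isConnected_connectedComponentIn_iff.mpr hinftyU
  · rw [hmain, compl_compl]
    apply locallyConnected_subtype
    intro p hp U' hU'
    obtain ⟨t, hto, hpt, htK⟩ := mem_nhdsWithin.mp hU'
    rcases onePoint_cases p with rfl | ⟨y, rfl⟩
    · -- the point at infinity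
      obtain ⟨-, hL₀cpt⟩ := (OnePoint.isOpen_iff_of_mem hpt).mp hto
      set L : Set (Euc d) := S ∪ Subtype.val '' (OnePoint.some ⁻¹' t)ᶜ with hLdef
      have hLcpt : IsCompact L := hS.union (hL₀cpt.image continuous_subtype_val)
      have hLO : L ⊆ O := union_subset hSO (by rintro _ ⟨w, -, rfl⟩; exact w.2)
      have hLscpt : IsCompact (infill O L) := isCompact_infill hO hLO hLcpt
      have hLsO : infill O L ⊆ O := infill_subset hLO
      have hLLs : L ⊆ infill O L := subset_union_left
      have hSLs : S ⊆ infill O L := (subset_union_left (t := Subtype.val '' (OnePoint.some ⁻¹' t)ᶜ)).trans hLLs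
      have hnomem : ∀ w : ↥O, (w : Euc d) ∈ O \ infill O L →
          ((w : Euc d) ∈ O \ S ∧
           ¬(IsCompact (closure (connectedComponentIn (O \ S) (w : Euc d))) ∧
             closure (connectedComponentIn (O \ S) (w : Euc d)) ⊆ O)) := by
        intro w hw
        have hwOS : (w : Euc d) ∈ O \ S := ⟨hw.1, fun h => hw.2 (hSLs h)⟩
        obtain ⟨-, hnc⟩ := cc_diff_infill hO hLO hLcpt hw
        refine ⟨hwOS, ?_⟩
        rintro ⟨h1, h2⟩
        have hmono : connectedComponentIn (O \ L) (w : Euc d) ⊆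
            connectedComponentIn (O \ S) (w : Euc d) :=
          connectedComponentIn_mono _ (diff_subset_diff_right subset_union_left)
        exact hnc ⟨h1.of_isClosed_subset isClosed_closure (closure_mono hmono),
          (closure_mono hmono).trans h2⟩
      refine ⟨insert (OnePoint.infty : OnePoint ↥O) (inOnePoint O (O \ infill O L)),
        ?_, ?_, ?_, ?_⟩
      · refine mem_nhdsWithin.mpr ⟨(inOnePoint O (infill O L))ᶜ,
          (isCompact_inOnePoint hLscpt hLsO).isClosed.isOpen_compl,
          infty_notMem_inOnePoint _, ?_⟩
        rintro p ⟨hp1, hp2⟩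
        rw [hKeq] at hp2
        rcases hp2 with rfl | ⟨w, hw, rfl⟩
        · exact mem_insert _ _
        · refine mem_insert_of_mem _ (mem_inOnePoint_coe.mpr ⟨w.2, fun hws => ?_⟩)
          exact hp1 ⟨w, hws, rfl⟩
      · rintro q (rfl | ⟨w, hw, rfl⟩)
        · exact htK ⟨hpt, hinfK⟩
        · have hwt : OnePoint.some w ∈ t := by
            by_contra hwnt
            exact hw.2 (hLLs (Or.inr ⟨w, hwnt, rfl⟩))
          have hh := hnomem w hw
          exact htK ⟨hwt, hKmem w hh.1 hh.2⟩
      · rintro q (rfl | ⟨w, hw, rfl⟩)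
        · exact hinfK
        · have hh := hnomem w hw
          exact hKmem w hh.1 hh.2
      · apply isPreconnected_of_forall (OnePoint.infty : OnePoint ↥O)
        rintro q (rfl | ⟨w, hw, rfl⟩)
        · exact ⟨{OnePoint.infty}, singleton_subset_iff.mpr (mem_insert _ _),
            mem_singleton _, mem_singleton _, isPreconnected_singleton⟩
        · obtain ⟨hEq, hnc⟩ := cc_diff_infill hO hLO hLcpt hw
          have hCO : connectedComponentIn (O \ L) (w : Euc d) ⊆ O :=
            (connectedComponentIn_subset _ _).trans diff_subset
          refine ⟨insert (OnePoint.infty : OnePoint ↥O)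
              (inOnePoint O (connectedComponentIn (O \ L) (w : Euc d))), ?_,
              mem_insert _ _, ?_, ?_⟩
          · rintro q' (rfl | ⟨v, hv, rfl⟩)
            · exact mem_insert _ _
            · refine mem_insert_of_mem _ (mem_inOnePoint_coe.mpr ?_)
              have hv2 : (v : Euc d) ∈ connectedComponentIn (O \ infill O L) (w : Euc d) := by
                rw [hEq]; exact hv
              exact connectedComponentIn_subset _ _ hv2
          · exact mem_insert_of_mem _ (mem_inOnePoint_coe.mpr
              (mem_connectedComponentIn ⟨hw.1, fun h => hw.2 (hLLs h)⟩))
          · exact (preconn_insert_infty hCO isPreconnected_connectedComponentIn hnc).2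
    · -- a finite point
      have hyA : (y : Euc d) ∈ O \ infill O S := by
        rw [hKeq] at hp
        rcases hp with h | h
        · exact absurd h (OnePoint.coe_ne_infty y)
        · exact mem_inOnePoint_coe.mp h
      have hWo : IsOpen (Subtype.val ''
          (OnePoint.some ⁻¹' (t ∩ inOnePoint O (O \ infill O S)))) :=
        hO.isOpenEmbedding_subtypeVal.isOpenMap _
          ((hto.inter (isOpen_inOnePoint hA)).preimage OnePoint.continuous_coe)
      have hyW : (y : Euc d) ∈ Subtype.val ''
          (OnePoint.some ⁻¹' (t ∩ inOnePoint O (O \ infill O S))) :=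
        ⟨y, ⟨hpt, mem_inOnePoint_coe.mpr hyA⟩, rfl⟩
      have hWA : Subtype.val '' (OnePoint.some ⁻¹' (t ∩ inOnePoint O (O \ infill O S))) ⊆
          O \ infill O S := by
        rintro _ ⟨w, ⟨-, hw2⟩, rfl⟩
        exact mem_inOnePoint_coe.mp hw2
      obtain ⟨V₀, hV₀n, hV₀c, hV₀W⟩ :=
        locallyConnectedSpace_iff_connected_subsets.mp inferInstance (y : Euc d) _
          (hWo.mem_nhds hyW)
      have hV₀O : V₀ ⊆ O := hV₀W.trans (hWA.trans diff_subset)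
      refine ⟨inOnePoint O V₀, ?_, ?_, ?_, isPreconnected_inOnePoint hV₀c hV₀O⟩
      · obtain ⟨t₀, ht₀sub, ht₀o, hyt₀⟩ := _root_.mem_nhds_iff.mp hV₀n
        refine mem_nhdsWithin.mpr ⟨inOnePoint O t₀, isOpen_inOnePoint ht₀o,
          mem_inOnePoint_coe.mpr hyt₀, ?_⟩
        rintro q ⟨⟨v, hv, rfl⟩, -⟩
        exact mem_inOnePoint_coe.mpr (ht₀sub hv)
      · rintro _ ⟨v, hv, rfl⟩
        apply htK
        obtain ⟨w, hw, hwv⟩ := hV₀W hv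
        have hwv' : w = v := Subtype.coe_injective hwv
        subst hwv'
        refine ⟨hw.1, ?_⟩
        rw [hKeq]
        exact mem_insert_of_mem _ hw.2
      · rintro _ ⟨v, hv, rfl⟩
        rw [hKeq]
        exact mem_insert_of_mem _ (mem_inOnePoint_coe.mpr (hWA (hV₀W hv)))
end
end

section
/- Let O, O′ be open sets with O ⊆ O′ ⊆ ℝ^d_∞ and let S ⊆ O be compact. Then infill_O S ⊆ infill_{O′} S. -/
open MeasureTheory Metric Set Filter
open scoped ENNReal Topology OnePoint

noncomputable section

/-- The complement of a large ball, together with `∞`, is preconnected in `ℝ^d_∞`. -/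
lemma aux_preconnected_nbhd_infty {d : ℕ} {r : ℝ} (hr : 0 < r) :
    IsPreconnected ({(∞ : OnePoint (Euc d))} ∪
      (↑) '' (closedBall (0 : Euc d) r)ᶜ) := by
  -- rays to infinity
  have hray : ∀ x : Euc d, x ∈ (closedBall (0 : Euc d) r)ᶜ →
      IsPreconnected ({(∞ : OnePoint (Euc d))} ∪
        (fun t : ℝ => ((t • x : Euc d) : OnePoint (Euc d))) '' Ici 1) := by
    intro x hx
    have hxr : r < ‖x‖ := by
      simpa [mem_closedBall, dist_eq_norm] using hx
    have hx0 : 0 < ‖x‖ := lt_trans hr hxr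
    set R : Set (OnePoint (Euc d)) :=
      (fun t : ℝ => ((t • x : Euc d) : OnePoint (Euc d))) '' Ici 1 with hR
    have hRpc : IsPreconnected R := by
      apply (isPreconnected_Ici (a := (1:ℝ))).image
      exact (OnePoint.continuous_coe.comp (continuous_id.smul continuous_const)).continuousOn
    have hinf : (∞ : OnePoint (Euc d)) ∈ closure R := by
      rw [mem_closure_iff_nhds]
      intro U hU
      rcases (OnePoint.hasBasis_nhds_infty.mem_iff).mp hU with ⟨s, ⟨_, hsc⟩, hsU⟩
      rcases hsc.isBounded.subset_closedBall 0 with ⟨M, hM⟩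
      refine ⟨((max 1 ((M + 1) / ‖x‖) • x : Euc d) : OnePoint (Euc d)), ?_, ?_⟩
      · apply hsU
        left
        refine ⟨_, ?_, rfl⟩
        intro hmem
        have := hM hmem
        have h1 : (M + 1) / ‖x‖ * ‖x‖ ≤ max 1 ((M + 1) / ‖x‖) * ‖x‖ :=
          mul_le_mul_of_nonneg_right (le_max_right _ _) hx0.le
        rw [div_mul_cancel₀ _ (ne_of_gt hx0)] at h1
        have h2 : ‖(max 1 ((M + 1) / ‖x‖) • x : Euc d)‖ ≤ M := by
          simpa [mem_closedBall, dist_eq_norm] using this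
        rw [norm_smul, Real.norm_eq_abs,
          abs_of_pos (lt_of_lt_of_le one_pos (le_max_left _ _))] at h2
        linarith
      · exact ⟨max 1 ((M + 1) / ‖x‖), Set.mem_Ici.mpr (le_max_left _ _), rfl⟩
    have hsub : {(∞ : OnePoint (Euc d))} ∪ R ⊆ closure R := by
      rintro z (hz | hz)
      · rwa [mem_singleton_iff.mp hz]
      · exact subset_closure hz
    exact hRpc.subset_closure subset_union_right hsub
  -- union over rays
  have key : ({(∞ : OnePoint (Euc d))} ∪ (↑) '' (closedBall (0 : Euc d) r)ᶜ) =
      ⋃₀ { T | T = {(∞ : OnePoint (Euc d))} ∨ ∃ x ∈ (closedBall (0 : Euc d) r)ᶜ,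
        T = {(∞ : OnePoint (Euc d))} ∪
          (fun t : ℝ => ((t • x : Euc d) : OnePoint (Euc d))) '' Ici 1 } := by
    apply Subset.antisymm
    · rintro z (hz | ⟨x, hx, rfl⟩)
      · exact ⟨{(∞ : OnePoint (Euc d))}, Or.inl rfl, hz⟩
      · refine ⟨_, Or.inr ⟨x, hx, rfl⟩, Or.inr ⟨1, Set.self_mem_Ici, by simp⟩⟩
    · rintro z ⟨T, (rfl | ⟨x, hx, rfl⟩), hzT⟩
      · exact Or.inl hzT
      · rcases hzT with hz | ⟨t, ht, rfl⟩
        · exact Or.inl hz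
        · refine Or.inr ⟨t • x, ?_, rfl⟩
          have hxr : r < ‖x‖ := by
            simpa [mem_closedBall, dist_eq_norm] using hx
          simp only [mem_compl_iff, mem_closedBall, dist_eq_norm, sub_zero, not_le]
          calc r < ‖x‖ := hxr
            _ = 1 * ‖x‖ := (one_mul _).symm
            _ ≤ t * ‖x‖ := mul_le_mul_of_nonneg_right ht (norm_nonneg _)
            _ = ‖t • x‖ := by
              rw [norm_smul, Real.norm_eq_abs, abs_of_pos (lt_of_lt_of_le one_pos ht)]
  rw [key]
  apply isPreconnected_sUnion (∞ : OnePoint (Euc d))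
  · rintro T (rfl | ⟨x, hx, rfl⟩)
    · exact rfl
    · exact Or.inl rfl
  · rintro T (rfl | ⟨x, hx, rfl⟩)
    · exact isPreconnected_singleton
    · exact hray x hx

/-- `ℝ^d_∞` is locally connected. -/
instance aux_locallyConnected (d : ℕ) : LocallyConnectedSpace (OnePoint (Euc d)) := by
  rw [locallyConnectedSpace_iff_connected_subsets]
  intro x U hU
  induction x using OnePoint.rec with
  | infty =>
    rcases (OnePoint.hasBasis_nhds_infty.mem_iff).mp hU with ⟨s, ⟨_, hsc⟩, hsU⟩
    rcases hsc.isBounded.subset_closedBall 0 with ⟨M, hM⟩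
    set r : ℝ := max M 1 with hrdef
    have hr : 0 < r := lt_of_lt_of_le one_pos (le_max_right _ _)
    refine ⟨{(∞ : OnePoint (Euc d))} ∪ (↑) '' (closedBall (0 : Euc d) r)ᶜ, ?_, ?_, ?_⟩
    · -- this set is an open neighborhood of ∞
      have hpre : ((↑) ⁻¹' ({(∞ : OnePoint (Euc d))} ∪ (↑) '' (closedBall (0 : Euc d) r)ᶜ) :
          Set (Euc d)) = (closedBall (0 : Euc d) r)ᶜ := by
        ext z
        simp [OnePoint.coe_eq_coe, OnePoint.coe_ne_infty]
      have hopen : IsOpen ({(∞ : OnePoint (Euc d))} ∪ (↑) '' (closedBall (0 : Euc d) r)ᶜ) := by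
        rw [OnePoint.isOpen_iff_of_mem (Or.inl rfl), hpre, compl_compl]
        exact ⟨isClosed_closedBall, isCompact_closedBall _ _⟩
      exact hopen.mem_nhds (Or.inl rfl)
    · exact aux_preconnected_nbhd_infty hr
    · rintro z (hz | ⟨a, ha, rfl⟩)
      · exact hsU (Or.inr hz)
      · apply hsU
        left
        refine ⟨a, fun hmem => ha ?_, rfl⟩
        exact (closedBall_subset_closedBall (le_max_left _ _)) (hM hmem)
  | coe a =>
    rw [OnePoint.nhds_coe_eq, mem_map] at hU
    rcases Metric.mem_nhds_iff.mp hU with ⟨ε, hε, hball⟩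
    refine ⟨(↑) '' ball a ε, ?_, ?_, ?_⟩
    · rw [OnePoint.nhds_coe_eq]
      exact image_mem_map (ball_mem_nhds a hε)
    · exact ((convex_ball a ε).isPreconnected).image _ OnePoint.continuous_coe.continuousOn
    · rintro z ⟨b, hb, rfl⟩
      exact hball hb

/-- If `O ⊆ O'` are open subsets of the one-point compactification
`ℝ^d_∞` of `ℝ^d` and `S ⊆ O` is compact, then `infill O S ⊆ infill O' S`. -/
theorem stmt_2 {d : ℕ} (O O' : Set (OnePoint (Euc d)))
    (hO : IsOpen O) (hO' : IsOpen O') (hOO' : O ⊆ O')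
    (S : Set (OnePoint (Euc d))) (hSO : S ⊆ O) (hS : IsCompact S) :
    infill O S ⊆ infill O' S := by
  haveI : T4Space (OnePoint (Euc d)) := ⟨⟩
  intro y hy
  rcases hy with hy | ⟨x, hx, hyC, hCcomp, hCO⟩
  · exact Or.inl hy
  have hScl : IsClosed S := hS.isClosed
  have hUopen : IsOpen (O \ S) := hO.sdiff hScl
  -- rename the component through x to the component through y
  have hCy : connectedComponentIn (O \ S) x = connectedComponentIn (O \ S) y :=
    connectedComponentIn_eq hyC
  rw [hCy] at hCcomp hCO hyC
  set C := connectedComponentIn (O \ S) y with hCdef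
  have hCcomp' : IsCompact (closure C) := hCcomp
  have hCO' : closure C ⊆ O := hCO
  have hyU : y ∈ O \ S := connectedComponentIn_subset _ _ hyC
  have hyU' : y ∈ O' \ S := ⟨hOO' hyU.1, hyU.2⟩
  have hyCmem : y ∈ C := hyC
  -- C is open
  have hCopen : IsOpen C := hUopen.connectedComponentIn
  -- the bigger component
  set C' := connectedComponentIn (O' \ S) y with hC'def
  have hCC' : C ⊆ C' := connectedComponentIn_mono y (diff_subset_diff_left hOO')
  -- C' ∩ closure C ⊆ C
  have hkey : C' ∩ closure C ⊆ C := by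
    rintro z ⟨hzC', hzcl⟩
    have hzO : z ∈ O := hCO' hzcl
    have hzS : z ∉ S := (connectedComponentIn_subset _ _ hzC').2
    -- C ∪ {z} is preconnected, contained in O \ S, contains y
    have hpc : IsPreconnected (C ∪ {z}) := by
      apply isPreconnected_connectedComponentIn.subset_closure subset_union_left
      rintro w (hw | hw)
      · exact subset_closure hw
      · rwa [mem_singleton_iff.mp hw]
    have hsub : C ∪ {z} ⊆ O \ S := by
      rintro w (hw | hw)
      · exact connectedComponentIn_subset _ _ hw
      · rw [mem_singleton_iff.mp hw]; exact ⟨hzO, hzS⟩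
    have := hpc.subset_connectedComponentIn (Or.inl hyCmem) hsub
    exact this (Or.inr rfl)
  -- C' ⊆ closure C by connectedness
  have hC'subcl : C' ⊆ C := by
    have hC'pc : IsPreconnected C' := isPreconnected_connectedComponentIn
    by_contra hcon
    rcases not_subset.mp hcon with ⟨w, hwC', hwC⟩
    have hwcl : w ∉ closure C := fun h => hwC (hkey ⟨hwC', h⟩)
    have := hC'pc C (closure C)ᶜ hCopen (isClosed_closure.isOpen_compl)
      (fun z hz => (Classical.em (z ∈ closure C)).elim
        (fun h => Or.inl (hkey ⟨hz, h⟩)) fun h => Or.inr h)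
      ⟨y, hCC' hyCmem, hyCmem⟩ ⟨w, hwC', hwcl⟩
    rcases this with ⟨z, _, hzC, hzcl⟩
    exact hzcl (subset_closure hzC)
  have hC'eq : C' = C := hC'subcl.antisymm hCC'
  refine Or.inr ⟨y, hyU', ?_, ?_, ?_⟩
  · exact mem_connectedComponentIn hyU'
  · rw [← hC'def, hC'eq]; exact hCcomp'
  · rw [← hC'def, hC'eq]; exact fun z hz => hOO' (hCO' hz)
end
end

section
/- Let O ⊆ ℝ^d be an open set and let S ⊆ O be compact. Then ℝ^d∖infill_O S has only finitely many connected components. -/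
open MeasureTheory Metric Set Filter
open scoped ENNReal Topology OnePoint

noncomputable section

lemma aux_ccIn_rel_closed {X : Type*} [TopologicalSpace X] {F : Set X} {x : X} :
    closure (connectedComponentIn F x) ∩ F ⊆ connectedComponentIn F x := by
  by_cases hx : x ∈ F
  · have hE : IsPreconnected (connectedComponentIn F x ∪
        (closure (connectedComponentIn F x) ∩ F)) := by
      refine isPreconnected_connectedComponentIn.subset_closure subset_union_left ?_
      exact union_subset subset_closure inter_subset_left
    have := hE.subset_connectedComponentIn
      (Or.inl (mem_connectedComponentIn hx))
      (union_subset (connectedComponentIn_subset F x) inter_subset_right)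
    exact fun z hz => this (Or.inr hz)
  · rw [connectedComponentIn_eq_empty hx]
    simp

lemma aux_min_principle {d : ℕ} {D : Set (Euc d)} (hD : IsOpen D)
    (hDc : IsCompact (closure D)) (hne : D.Nonempty)
    {f : Euc d → ℝ} (hf : Continuous f)
    (hmin : ∀ y ∈ D, ∀ r : ℝ, 0 < r → ∃ z ∈ ball y r, f z < f y)
    {m : ℝ} (hbd : ∀ z ∈ closure D, z ∉ D → m ≤ f z) :
    ∀ z ∈ closure D, m ≤ f z := by
  obtain ⟨y₀, hy₀, hmin₀⟩ := hDc.exists_isMinOn hne.closure hf.continuousOn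
  by_cases hy : y₀ ∈ D
  · obtain ⟨r, hr, hball⟩ := Metric.isOpen_iff.1 hD y₀ hy
    obtain ⟨z, hz, hfz⟩ := hmin y₀ hy r hr
    exact absurd (hmin₀ (subset_closure (hball hz))) (not_le.2 hfz)
  · exact fun z hz => le_trans (hbd y₀ hy₀ hy) (hmin₀ hz)

lemma aux_norm_incr {d : ℕ} (hd : 0 < d) (y : Euc d) (r : ℝ) (hr : 0 < r) :
    ∃ z ∈ ball y r, ‖y‖ < ‖z‖ := by
  by_cases hy : y = 0
  · refine ⟨EuclideanSpace.single ⟨0, hd⟩ (r/2), ?_, ?_⟩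
    · rw [mem_ball, hy, dist_zero_right, EuclideanSpace.norm_single]
      rw [Real.norm_eq_abs, abs_of_pos (by linarith)]; linarith
    · rw [hy, norm_zero, EuclideanSpace.norm_single, Real.norm_eq_abs,
        abs_of_pos (by linarith)]; linarith
  · have hny : 0 < ‖y‖ := norm_pos_iff.2 hy
    have hcan : r / (2 * ‖y‖) * ‖y‖ = r / 2 := by field_simp
    refine ⟨(1 + r / (2 * ‖y‖)) • y, ?_, ?_⟩
    · rw [mem_ball, dist_eq_norm]
      have h3 : (1 + r / (2 * ‖y‖)) • y - y = (r / (2 * ‖y‖)) • y := by module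
      rw [h3, norm_smul, Real.norm_eq_abs, abs_of_pos (by positivity)]
      linarith [hcan]
    · rw [norm_smul, Real.norm_eq_abs, abs_of_pos (by positivity), add_mul, one_mul]
      linarith [hcan]

lemma aux_infDist_decr {d : ℕ} {O : Set (Euc d)} (hO : IsOpen O) (hne : Oᶜ.Nonempty)
    {y : Euc d} (hy : y ∈ O) (r : ℝ) (hr : 0 < r) :
    ∃ z ∈ ball y r, infDist z Oᶜ < infDist y Oᶜ := by
  obtain ⟨p, hp, hpd⟩ := hO.isClosed_compl.exists_infDist_eq_dist hne y
  have hyp : 0 < dist y p := by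
    rcases eq_or_lt_of_le (dist_nonneg : (0:ℝ) ≤ dist y p) with h | h
    · have : y = p := eq_of_dist_eq_zero h.symm
      exact absurd (this ▸ hp) (by simp [hy])
    · exact h
  set t : ℝ := min (1/2) (r / (2 * dist y p)) with ht
  have ht0 : 0 < t := lt_min (by norm_num) (by positivity)
  have ht1 : t < 1 := lt_of_le_of_lt (min_le_left _ _) (by norm_num)
  refine ⟨y + t • (p - y), ?_, ?_⟩
  · rw [mem_ball, dist_eq_norm]
    have h4 : y + t • (p - y) - y = t • (p - y) := by module
    rw [h4, norm_smul, Real.norm_eq_abs, abs_of_pos ht0]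
    have h1 : ‖p - y‖ = dist y p := by rw [dist_comm, dist_eq_norm]
    rw [h1]
    have h5 : r / (2 * dist y p) * dist y p = r / 2 := by field_simp
    calc t * dist y p ≤ (r / (2 * dist y p)) * dist y p :=
          mul_le_mul_of_nonneg_right (min_le_right _ _) dist_nonneg
      _ = r / 2 := h5
      _ < r := by linarith
  · calc infDist (y + t • (p - y)) Oᶜ ≤ dist (y + t • (p - y)) p :=
          infDist_le_dist_of_mem hp
      _ = (1 - t) * dist y p := by
          rw [dist_eq_norm]
          have h6 : y + t • (p - y) - p = (1 - t) • (y - p) := by module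
          rw [h6, norm_smul, Real.norm_eq_abs, abs_of_pos (by linarith),
            ← dist_eq_norm]
      _ < dist y p := by nlinarith
      _ = infDist y Oᶜ := hpd.symm


/-- For a compact subset `S` of an open set `O ⊆ ℝ^d`, the complement
`ℝ^d \ infill O S` has only finitely many connected components. -/
theorem stmt_3 {d : ℕ} (O : Set (Euc d)) (hO : IsOpen O) (hOne : O.Nonempty)
    (S : Set (Euc d)) (hSO : S ⊆ O) (hS : IsCompact S) :
    {C : Set (Euc d) | ∃ x ∈ (infill O S)ᶜ,
        C = connectedComponentIn ((infill O S)ᶜ) x}.Finite := by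
  classical
  rcases Nat.eq_zero_or_pos d with rfl | hd
  · haveI : Subsingleton (Euc 0) := ⟨fun a b => PiLp.ext fun i => i.elim0⟩
    exact Set.toFinite _
  have hW : IsOpen (O \ S) := hO.sdiff hS.isClosed
  have hKO : infill O S ⊆ O := by
    rintro y (hy | ⟨x, hx, hy, _, _⟩)
    · exact hSO hy
    · exact ((connectedComponentIn_subset _ _) hy).1
  have hfill : ∀ y : Euc d, y ∈ infill O S → y ∉ S → y ∈ O \ S ∧
      IsCompact (closure (connectedComponentIn (O \ S) y)) ∧
      closure (connectedComponentIn (O \ S) y) ⊆ O := by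
    rintro y (hy | ⟨x, hx, hy, hc, hsub⟩) hyS
    · exact absurd hy hyS
    · have hyW : y ∈ O \ S := connectedComponentIn_subset _ _ hy
      have he : connectedComponentIn (O \ S) x = connectedComponentIn (O \ S) y :=
        connectedComponentIn_eq hy
      exact ⟨hyW, he ▸ hc, he ▸ hsub⟩
  have hmemfill : ∀ y ∈ O \ S,
      IsCompact (closure (connectedComponentIn (O \ S) y)) →
      closure (connectedComponentIn (O \ S) y) ⊆ O → y ∈ infill O S :=
    fun y hy hc hs => Or.inr ⟨y, hy, mem_connectedComponentIn hy, hc, hs⟩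
  have hfrontier : ∀ y ∈ infill O S, y ∉ S →
      ∀ z ∈ closure (connectedComponentIn (O \ S) y),
        z ∉ connectedComponentIn (O \ S) y → z ∈ S := by
    intro y hyK hyS z hz hzD
    obtain ⟨hyW, hc, hsub⟩ := hfill y hyK hyS
    have hzO : z ∈ O := hsub hz
    by_contra hzS
    exact hzD (aux_ccIn_rel_closed ⟨hz, hzO, hzS⟩)
  obtain ⟨δ, hδ, hδsub⟩ := hS.exists_thickening_subset_open hO hSO
  obtain ⟨R₀, hR₀⟩ := hS.isBounded.subset_closedBall 0
  set R : ℝ := max R₀ 0 with hRdef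
  have hR0 : (0:ℝ) ≤ R := le_max_right _ _
  have hSR : S ⊆ closedBall 0 R :=
    hR₀.trans (closedBall_subset_closedBall (le_max_left _ _))
  -- norm bound on the infill
  have hKnorm : ∀ z ∈ infill O S, ‖z‖ ≤ R := by
    intro z hz
    by_cases hzS : z ∈ S
    · exact mem_closedBall_zero_iff.1 (hSR hzS)
    obtain ⟨hzW, hc, hsub⟩ := hfill z hz hzS
    have key : ∀ w ∈ closure (connectedComponentIn (O \ S) z), -R ≤ -‖w‖ := by
      refine aux_min_principle hW.connectedComponentIn hc
        ⟨z, mem_connectedComponentIn hzW⟩ continuous_norm.neg ?_ ?_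
      · intro y _ r hr
        obtain ⟨w, hw, hlt⟩ := aux_norm_incr hd y r hr
        exact ⟨w, hw, by simp only [Pi.neg_apply]; linarith⟩
      · intro w hw hwD
        have hwS : w ∈ S := hfrontier z hz hzS w hw hwD
        have := mem_closedBall_zero_iff.1 (hSR hwS)
        simp only [Pi.neg_apply]; linarith
    have := key z (subset_closure (mem_connectedComponentIn hzW))
    linarith
  -- distance bound to the complement of O
  have hKdist : ∀ z ∈ infill O S, ∀ q, q ∉ O → δ ≤ dist z q := by
    intro z hz q hq
    have hOc : (Oᶜ).Nonempty := ⟨q, hq⟩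
    have hSdist : ∀ s ∈ S, δ ≤ infDist s Oᶜ := by
      intro s hsS
      by_contra h
      push_neg at h
      obtain ⟨q', hq', hd'⟩ := (infDist_lt_iff hOc).1 h
      exact hq' (hδsub (mem_thickening_iff.2 ⟨s, hsS, by rwa [dist_comm]⟩))
    have hmain : δ ≤ infDist z Oᶜ := by
      by_cases hzS : z ∈ S
      · exact hSdist z hzS
      obtain ⟨hzW, hc, hsub⟩ := hfill z hz hzS
      have key : ∀ w ∈ closure (connectedComponentIn (O \ S) z),
          δ ≤ infDist w Oᶜ := by
        refine aux_min_principle hW.connectedComponentIn hc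
          ⟨z, mem_connectedComponentIn hzW⟩ (continuous_infDist_pt Oᶜ) ?_ ?_
        · intro y hy r hr
          exact aux_infDist_decr hO hOc ((connectedComponentIn_subset _ _ hy).1) r hr
        · intro w hw hwD
          exact hSdist w (hfrontier z hz hzS w hw hwD)
      exact key z (subset_closure (mem_connectedComponentIn hzW))
    exact hmain.trans (infDist_le_dist_of_mem hq)
  set T : Set (Euc d) := (Oᶜ ∩ closedBall 0 R) ∪ sphere (0:Euc d) (R+1) with hTdef
  -- every component contains a point of T
  have hpick : ∀ x ∈ (infill O S)ᶜ, ∃ p,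
      p ∈ connectedComponentIn ((infill O S)ᶜ) x ∧ p ∈ T := by
    intro x hx
    by_cases hbig : ∃ q ∈ connectedComponentIn ((infill O S)ᶜ) x, R < ‖q‖
    · obtain ⟨q, hqC, hq⟩ := hbig
      have hq0 : 0 < ‖q‖ := lt_of_le_of_lt hR0 hq
      set p := ((R+1)/‖q‖) • q with hpdef
      have hpn : ‖p‖ = R + 1 := by
        rw [hpdef, norm_smul, Real.norm_eq_abs, abs_of_pos (by positivity)]
        field_simp
      have hseg : segment ℝ q p ⊆ (infill O S)ᶜ := by
        rintro w ⟨a, b, ha, hb, hab, hw⟩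
        have hwe : w = (a + b*((R+1)/‖q‖)) • q := by
          rw [← hw, hpdef]; module
        have hnw : ‖w‖ = (a + b*((R+1)/‖q‖)) * ‖q‖ := by
          rw [hwe, norm_smul, Real.norm_eq_abs, abs_of_nonneg (by positivity)]
        have hgt : R < ‖w‖ := by
          have hcc : (R+1)/‖q‖ * ‖q‖ = R+1 := div_mul_cancel₀ _ (ne_of_gt hq0)
          have hh : (a + b*((R+1)/‖q‖)) * ‖q‖ = a*‖q‖ + b*(R+1) := by
            rw [add_mul, mul_assoc, hcc]
          rw [hnw, hh]
          rcases hb.eq_or_lt with hb0 | hb0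
          · have ha1 : a = 1 := by linarith
            rw [ha1, ← hb0]; simpa using hq
          · nlinarith [mul_le_mul_of_nonneg_left hq.le ha]
        intro hwK
        exact absurd (hKnorm w hwK) (not_le.2 hgt)
      have hpC : p ∈ connectedComponentIn ((infill O S)ᶜ) x := by
        have h1 : segment ℝ q p ⊆ connectedComponentIn ((infill O S)ᶜ) q :=
          ((convex_segment q p).isPreconnected).subset_connectedComponentIn
            (left_mem_segment ℝ q p) hseg
        rw [connectedComponentIn_eq hqC]
        exact h1 (right_mem_segment ℝ q p)
      exact ⟨p, hpC, Or.inr (by simpa [mem_sphere_zero_iff_norm] using hpn)⟩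
    · push_neg at hbig
      have hCB : connectedComponentIn ((infill O S)ᶜ) x ⊆ closedBall 0 R :=
        fun q hq => mem_closedBall_zero_iff.2 (hbig q hq)
      by_cases hCO : ∃ p ∈ connectedComponentIn ((infill O S)ᶜ) x, p ∉ O
      · obtain ⟨p, hpC, hpO⟩ := hCO
        exact ⟨p, hpC, Or.inl ⟨hpO, hCB hpC⟩⟩
      · exfalso
        push_neg at hCO
        have hxO : x ∈ O := hCO x (mem_connectedComponentIn hx)
        have hxS : x ∉ S := fun h => hx (Or.inl h)
        have hxW : x ∈ O \ S := ⟨hxO, hxS⟩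
        have hDK : connectedComponentIn (O \ S) x ⊆ (infill O S)ᶜ := by
          intro y hyD hyK
          have hyS : y ∉ S := (connectedComponentIn_subset _ _ hyD).2
          obtain ⟨hyW, hc, hsub⟩ := hfill y hyK hyS
          have he : connectedComponentIn (O \ S) x = connectedComponentIn (O \ S) y :=
            connectedComponentIn_eq hyD
          exact hx (hmemfill x hxW (by rw [he]; exact hc) (by rw [he]; exact hsub))
        have hDC : connectedComponentIn (O \ S) x ⊆
            connectedComponentIn ((infill O S)ᶜ) x :=
          isPreconnected_connectedComponentIn.subset_connectedComponentIn
            (mem_connectedComponentIn hxW) hDK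
        have hclC : closure (connectedComponentIn ((infill O S)ᶜ) x) ⊆ O := by
          intro w hw
          by_cases hwK : w ∈ infill O S
          · exact hKO hwK
          · exact hCO w (aux_ccIn_rel_closed ⟨hw, hwK⟩)
        have hCcomp : IsCompact (closure (connectedComponentIn ((infill O S)ᶜ) x)) :=
          (isCompact_closedBall (0:Euc d) R).of_isClosed_subset isClosed_closure
            (closure_minimal hCB Metric.isClosed_closedBall)
        have hDcomp : IsCompact (closure (connectedComponentIn (O \ S) x)) :=
          hCcomp.of_isClosed_subset isClosed_closure (closure_mono hDC)
        exact hx (hmemfill x hxW hDcomp ((closure_mono hDC).trans hclC))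
  -- separation
  set ε : ℝ := min δ 1 with hεdef
  have hε : 0 < ε := lt_min hδ one_pos
  have hsep : ∀ p p', p ∉ infill O S → p' ∉ infill O S → p ∈ T → p' ∈ T →
      dist p p' < ε →
      connectedComponentIn ((infill O S)ᶜ) p = connectedComponentIn ((infill O S)ᶜ) p' := by
    intro p p' hp hp' hT hT' hdist
    have hseg : segment ℝ p p' ⊆ (infill O S)ᶜ := by
      intro w hw
      have hwb : dist w p ≤ dist p p' ∧ dist w p' ≤ dist p p' := by
        have h1 : segment ℝ p p' ⊆ closedBall p (dist p p') :=
          (convex_closedBall p (dist p p')).segment_subset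
            (mem_closedBall_self dist_nonneg) (mem_closedBall'.2 le_rfl)
        have h2 : segment ℝ p p' ⊆ closedBall p' (dist p p') :=
          (convex_closedBall p' (dist p p')).segment_subset
            (mem_closedBall.2 (by rw [dist_comm]))
            (mem_closedBall_self dist_nonneg)
        exact ⟨mem_closedBall.1 (h1 hw), mem_closedBall.1 (h2 hw)⟩
      intro hwK
      rcases hT with hpO | hpS
      · have := hKdist w hwK p hpO.1
        have hεδ : ε ≤ δ := min_le_left _ _
        linarith [hwb.1]
      rcases hT' with hpO' | hpS'
      · have := hKdist w hwK p' hpO'.1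
        have hεδ : ε ≤ δ := min_le_left _ _
        linarith [hwb.2]
      · -- both on sphere
        have hpn : ‖p‖ = R + 1 := mem_sphere_zero_iff_norm.1 hpS
        have hwn : R < ‖w‖ := by
          have h3 : ‖p‖ - ‖w‖ ≤ ‖p - w‖ := norm_sub_norm_le _ _
          have h4 : ‖p - w‖ = dist w p := by rw [dist_comm, dist_eq_norm]
          have hε1 : ε ≤ 1 := min_le_right _ _
          rw [h4] at h3
          linarith [hwb.1]
        exact absurd (hKnorm w hwK) (not_le.2 hwn)
    have h1 : segment ℝ p p' ⊆ connectedComponentIn ((infill O S)ᶜ) p :=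
      ((convex_segment p p').isPreconnected).subset_connectedComponentIn
        (left_mem_segment ℝ p p') hseg
    exact connectedComponentIn_eq (h1 (right_mem_segment ℝ p p'))
  -- finishing: totally bounded covering
  have hTcomp : IsCompact T :=
    ((isCompact_closedBall (0:Euc d) R).inter_left hO.isClosed_compl).union
      (isCompact_sphere 0 (R+1))
  obtain ⟨t, htfin, htcov⟩ := (totallyBounded_iff.1 hTcomp.totallyBounded) (ε/2)
    (by linarith)
  -- choice of points
  have hchoice : ∀ C ∈ {C : Set (Euc d) | ∃ x ∈ (infill O S)ᶜ,
      C = connectedComponentIn ((infill O S)ᶜ) x}, ∃ p : Euc d,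
      p ∉ infill O S ∧ p ∈ T ∧ C = connectedComponentIn ((infill O S)ᶜ) p := by
    rintro C ⟨x, hx, rfl⟩
    obtain ⟨p, hpC, hpT⟩ := hpick x hx
    exact ⟨p, (connectedComponentIn_subset _ _) hpC, hpT, connectedComponentIn_eq hpC⟩
  choose! f hfK0 hfT0 hfC0 using hchoice
  have hf : ∀ C ∈ {C : Set (Euc d) | ∃ x ∈ (infill O S)ᶜ,
      C = connectedComponentIn ((infill O S)ᶜ) x},
      f C ∉ infill O S ∧ f C ∈ T ∧ C = connectedComponentIn ((infill O S)ᶜ) (f C) :=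
    fun C hC => ⟨hfK0 C hC, hfT0 C hC, hfC0 C hC⟩
  have hcov' : ∀ p ∈ T, ∃ c, c ∈ t ∧ p ∈ ball c (ε/2) := by
    intro p hp
    have := htcov hp
    simpa using this
  choose! g hg1 hg2 using hcov'
  have hg : ∀ p ∈ T, g p ∈ t ∧ p ∈ ball (g p) (ε/2) := fun p hp => ⟨hg1 p hp, hg2 p hp⟩
  refine Set.Finite.of_finite_image (f := g ∘ f) (htfin.subset ?_) ?_
  · rintro _ ⟨C, hC, rfl⟩
    exact (hg (f C) (hf C hC).2.1).1
  · intro C hC C' hC' heq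
    obtain ⟨hfK, hfT, hfC⟩ := hf C hC
    obtain ⟨hfK', hfT', hfC'⟩ := hf C' hC'
    have h1 := (hg (f C) hfT).2
    have h2 := (hg (f C') hfT').2
    have h4 : g (f C) = g (f C') := heq
    have hdd : dist (f C) (f C') < ε := by
      have h5 : dist (g (f C)) (f C') < ε/2 := by
        rw [h4, dist_comm]; exact mem_ball.1 h2
      linarith [dist_triangle (f C) (g (f C)) (f C'), mem_ball.1 h1, h5]
    rw [hfC, hfC']
    exact hsep (f C) (f C') hfK hfK' hfT hfT' hdd
end
end

section
/- Let O ⊆ ℝ^d be an open set, r > 0, and let ϑ be an Arens–Singer measure on the ball r𝔹 at 0, i.e. ϑ is a positive Borel measure with compact support in r𝔹 and ∫ h dϑ = h(0) for every h harmonic on r𝔹. Let ω be a positive Borel measure with compact support S = supp ω in O, and suppose ⋃_{x∈S} B(x,r) is relatively compact in O. Then the convolution ω∗ϑ, defined by (ω∗ϑ)(B) = ∫_S ϑ(B−x) dω(x) for Borel B ⋐ O, is a har(O)-balayage of ω: ∫ h dω = ∫ h d(ω∗ϑ) for every h harmonic on O. -/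
open MeasureTheory Metric Set Filter
open scoped ENNReal Topology OnePoint

noncomputable section

/-- Let `ϑ` be an Arens–Singer measure on the ball `r𝔹` at `0`, i.e. a
positive measure with compact support in `r𝔹` such that `∫ h dϑ = h 0` for every `h`
harmonic on `r𝔹`. Let `ω` be a finite positive measure with compact support `S = supp ω`
in the open set `O`, with `⋃_{x ∈ S} B(x,r)` relatively compact in `O`. Then the convolution
`ω ∗ ϑ`, determined by `B ↦ ∫_S ϑ(B - x) dω(x)`, is a `har(O)`-balayage of `ω`. -/
theorem stmt_12 {d : ℕ} (O : Set (Euc d)) (hO : IsOpen O) (hOne : O.Nonempty)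
    (r : ℝ) (hr : 0 < r)
    (ϑ : Measure (Euc d)) (hϑ : MeasCompIn ϑ (ball (0 : Euc d) r))
    (hAS : ∀ h : Euc d → ℝ, HarmOn h (ball (0 : Euc d) r) → ∫ y, h y ∂ϑ = h 0)
    (ω : Measure (Euc d)) (hω : MeasCompIn ω O)
    (hUr : IsCompact (closure (⋃ x ∈ msupp ω, ball x r)) ∧
      closure (⋃ x ∈ msupp ω, ball x r) ⊆ O)
    (μc : Measure (Euc d))
    (hμc : ∀ B : Set (Euc d), MeasurableSet B →
      μc B = ∫⁻ x in msupp ω, ϑ ((fun y => x + y) ⁻¹' B) ∂ω) :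
    ∀ h : Euc d → ℝ, HarmOn h O → ∫ y, h y ∂ω = ∫ y, h y ∂μc := by
  intro h hh
  obtain ⟨hSc, hSO, hSnull, hfin⟩ := hω
  obtain ⟨hTc, hTb, hTnull, hTfin⟩ := hϑ
  set S := msupp ω with hS
  set T := msupp ϑ with hT
  set K := closure (⋃ x ∈ S, ball x r) with hK
  have hKc : IsCompact K := hUr.1
  have hKO : K ⊆ O := hUr.2
  haveI : IsFiniteMeasure ω := ⟨hfin⟩
  haveI : IsFiniteMeasure ϑ := ⟨hTfin⟩
  have hballK : ∀ x ∈ S, ball x r ⊆ K := fun x hx =>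
    (subset_biUnion_of_mem (u := fun x => ball x r) hx).trans subset_closure
  have hSK : S ⊆ K := fun x hx => hballK x hx (mem_ball_self hr)
  have hSm : MeasurableSet S := hSc.isClosed.measurableSet
  -- bounded continuous extension `g` of `h` from `K`
  have hhK : ContinuousOn h K := hh.1.mono hKO
  obtain ⟨g₀, hg₀⟩ := ContinuousMap.exists_restrict_eq (Y := ℝ) hKc.isClosed
      ⟨K.restrict h, continuousOn_iff_continuous_restrict.mp hhK⟩
  have hg₀K : ∀ y ∈ K, g₀ y = h y := by
    intro y hy
    exact ContinuousMap.congr_fun hg₀ ⟨y, hy⟩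
  obtain ⟨M₀, hM₀⟩ := hKc.exists_bound_of_continuousOn hhK
  set M := max M₀ 0 with hM
  have hM0 : (0:ℝ) ≤ M := le_max_right _ _
  set g : Euc d → ℝ := fun y => max (-M) (min (g₀ y) M) with hg
  have hgc : Continuous g := continuous_const.max ((map_continuous g₀).min continuous_const)
  have hgK : ∀ y ∈ K, g y = h y := by
    intro y hy
    have h1 : |h y| ≤ M := le_trans (by simpa [Real.norm_eq_abs] using hM₀ y hy) (le_max_left _ _)
    rw [hg]
    simp only [hg₀K y hy]
    rw [min_eq_left (le_trans (le_abs_self _) h1),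
      max_eq_right (le_trans (neg_le_neg h1) (neg_abs_le _))]
  have hgb : ∀ y, |g y| ≤ M := by
    intro y
    rw [abs_le]
    exact ⟨le_max_left _ _, max_le (le_trans (neg_nonpos_of_nonneg hM0) hM0)
      (min_le_right _ _)⟩
  -- translates of `h` are harmonic on `ball 0 r`
  have htrans : ∀ x ∈ S, HarmOn (fun y => h (x + y)) (ball (0 : Euc d) r) := by
    intro x hx
    have hbO : ball x r ⊆ O := (hballK x hx).trans hKO
    constructor
    · refine (hh.1.mono hbO).comp (continuous_add_left x).continuousOn ?_
      intro y hy
      simpa [mem_ball, dist_eq_norm] using hy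
    · intro z ρ hρ hsub
      have hmp : MeasurePreserving (fun y : Euc d => x + y) volume volume :=
        measurePreserving_add_left volume x
      have hemb : MeasurableEmbedding (fun y : Euc d => x + y) :=
        (Homeomorph.addLeft x).measurableEmbedding
      have hpre : (fun y : Euc d => x + y) ⁻¹' closedBall (x + z) ρ = closedBall z ρ := by
        ext y
        simp [mem_closedBall, dist_eq_norm, add_sub_add_left_eq_sub]
      have hsub' : closedBall (x + z) ρ ⊆ O := by
        intro w hw
        apply hbO
        have hw' : w - x ∈ ball (0 : Euc d) r := hsub (by
          simpa [mem_closedBall, dist_eq_norm, sub_sub] using hw)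
        simpa [mem_ball, dist_eq_norm] using hw'
      have h1 : h (x + z) = ⨍ w in closedBall (x + z) ρ, h w ∂volume :=
        hh.2 (x + z) ρ hρ hsub'
      have h2 : ∫ y in closedBall z ρ, h (x + y) ∂volume
          = ∫ w in closedBall (x + z) ρ, h w ∂volume := by
        rw [← hpre]
        exact hmp.setIntegral_preimage_emb hemb _ _
      have h3 : volume (closedBall z ρ) = volume (closedBall (x + z) ρ) := by
        conv_lhs => rw [← hpre]
        exact hmp.measure_preimage measurableSet_closedBall.nullMeasurableSet
      show h (x + z) = ⨍ y in closedBall z ρ, h (x + y) ∂volume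
      rw [h1, setAverage_eq, setAverage_eq, h2, measureReal_def, measureReal_def, h3]
  -- `μc` is the convolution
  set μpr := (ω.restrict S).prod ϑ with hμpr
  have hμceq : μc = Measure.map (fun p : Euc d × Euc d => p.1 + p.2) μpr := by
    ext B hB
    rw [hμc B hB, Measure.map_apply measurable_add hB,
      Measure.prod_apply (measurable_add hB)]
    rfl
  have hμcK : μc Kᶜ = 0 := by
    rw [hμc _ isClosed_closure.measurableSet.compl]
    have hz : ∀ x ∈ S, ϑ ((fun y => x + y) ⁻¹' Kᶜ) = 0 := by
      intro x hx
      refine measure_mono_null (fun y hy => ?_) hTnull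
      show y ∉ T
      intro hyT
      refine hy (hballK x hx ?_)
      have := hTb hyT
      simpa [mem_ball, dist_eq_norm] using this
    calc ∫⁻ x in S, ϑ ((fun y => x + y) ⁻¹' Kᶜ) ∂ω
        = ∫⁻ _ in S, 0 ∂ω := setLIntegral_congr_fun hSm (fun x hx => hz x hx)
      _ = 0 := by simp
  -- main computation
  haveI : IsFiniteMeasure μpr := by rw [hμpr]; infer_instance
  have hgint : Integrable (fun p : Euc d × Euc d => g (p.1 + p.2)) μpr := by
    refine ⟨(hgc.comp continuous_add).aestronglyMeasurable, ?_⟩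
    refine HasFiniteIntegral.of_bounded (C := M) (ae_of_all _ fun p => ?_)
    simpa [Real.norm_eq_abs] using hgb (p.1 + p.2)
  have step1 : ∫ y, g y ∂μc = ∫ x in S, (∫ y, g (x + y) ∂ϑ) ∂ω := by
    rw [hμceq, integral_map measurable_add.aemeasurable hgc.aestronglyMeasurable]
    exact integral_prod _ hgint
  have hinner : ∀ x ∈ S, ∫ y, g (x + y) ∂ϑ = g x := by
    intro x hx
    have hsub : {y | ¬ g (x + y) = h (x + y)} ⊆ Tᶜ := by
      intro y hy hyT
      refine hy (hgK _ (hballK x hx ?_))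
      have := hTb hyT
      simpa [mem_ball, dist_eq_norm] using this
    have h1 : ∫ y, g (x + y) ∂ϑ = ∫ y, h (x + y) ∂ϑ :=
      integral_congr_ae (ae_iff.mpr (measure_mono_null hsub hTnull))
    rw [h1, hAS _ (htrans x hx), add_zero]
    exact (hgK x (hSK hx)).symm
  have step2 : ∫ x in S, (∫ y, g (x + y) ∂ϑ) ∂ω = ∫ x in S, g x ∂ω :=
    setIntegral_congr_fun hSm (fun x hx => hinner x hx)
  have hrS : ω.restrict S = ω :=
    Measure.restrict_eq_self_of_ae_mem (by rw [ae_iff]; exact hSnull)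
  have hhgω : ∫ y, h y ∂ω = ∫ y, g y ∂ω := by
    refine integral_congr_ae (ae_iff.mpr (measure_mono_null ?_ hSnull))
    exact fun y hy hyS => hy ((hgK y (hSK hyS)).symm)
  have hhgμc : ∫ y, h y ∂μc = ∫ y, g y ∂μc := by
    refine integral_congr_ae (ae_iff.mpr (measure_mono_null ?_ hμcK))
    exact fun y hy hyK => hy ((hgK y hyK).symm)
  calc ∫ y, h y ∂ω = ∫ y, g y ∂ω := hhgω
    _ = ∫ x in S, g x ∂ω := by rw [hrS]
    _ = ∫ x in S, (∫ y, g (x + y) ∂ϑ) ∂ω := step2.symm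
    _ = ∫ y, g y ∂μc := step1.symm
    _ = ∫ y, h y ∂μc := hhgμc.symm
end
end

section
/- Let O ⊆ ℝ^d be an open set, r > 0, and let ϑ be a Jensen measure on the ball r𝔹 at 0, i.e. ϑ is a positive Borel measure with compact support in r𝔹 and u(0) ≤ ∫ u dϑ for every u subharmonic on r𝔹. Let ω be a positive Borel measure with compact support S = supp ω in O, and suppose ⋃_{x∈S} B(x,r) is relatively compact in O. Then the convolution ω∗ϑ, defined by (ω∗ϑ)(B) = ∫_S ϑ(B−x) dω(x) for Borel B ⋐ O, is an sbh(O)-balayage of ω: ∫ u dω ≤ ∫ u d(ω∗ϑ) for every u subharmonic on O. -/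
open MeasureTheory Metric Set Filter
open scoped ENNReal Topology OnePoint

noncomputable section

/-! ### Auxiliary lemmas -/

lemma enn_ereal_eq {x : ℝ≥0∞} (hx : x ≠ ⊤) : (x : EReal) = ((x.toReal : ℝ) : EReal) := by
  rw [← EReal.toReal_coe_ennreal]
  exact (EReal.coe_toReal (by simp [hx]) (EReal.coe_ennreal_ne_bot x)).symm

lemma measurable_erealPos : Measurable erealPos := by
  unfold erealPos
  exact Measurable.ite (by simp [MeasurableSet.singleton, Set.setOf_eq_eq_singleton])
    measurable_const (ENNReal.measurable_ofReal.comp measurable_ereal_toReal)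

lemma erealPos_le_ofReal {x : EReal} {M : ℝ} (hM : 0 ≤ M) (h : x ≤ (M : EReal)) :
    erealPos x ≤ ENNReal.ofReal M := by
  have hx : x ≠ ⊤ := fun hx => by simp [hx] at h
  rw [erealPos, if_neg hx]
  refine ENNReal.ofReal_le_ofReal ?_
  induction x with
  | bot => simpa using hM
  | coe a => simpa using (by exact_mod_cast h : a ≤ M)
  | top => simp at hx

lemma erealPos_sub_erealPos_neg {w : EReal} (hw : w ≠ ⊤) :
    ((erealPos w : ℝ≥0∞) : EReal) - ((erealPos (-w) : ℝ≥0∞) : EReal) = w := by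
  induction w with
  | bot =>
      simp only [erealPos]
      norm_num
  | coe a =>
      simp only [erealPos, ← EReal.coe_neg]
      norm_num
      rw [← EReal.coe_sub]
      norm_cast
      rcases le_total a 0 with h | h
      · rw [max_eq_right h, max_eq_left (neg_nonneg.2 h)]; ring
      · rw [max_eq_left h, max_eq_right (neg_nonpos.2 h)]; ring
  | top => exact absurd rfl hw

lemma er_ineq {a b p n : ℝ≥0∞} (ha : a ≠ ⊤) (hp : p ≠ ⊤)
    (h : (a : EReal) - (b : EReal) ≤ (p : EReal) - (n : EReal)) : a + n ≤ p + b := by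
  by_cases hb : b = ⊤
  · simp [hb]
  by_cases hn : n = ⊤
  · exfalso
    rw [hn, EReal.coe_ennreal_top, EReal.sub_top, le_bot_iff] at h
    rw [enn_ereal_eq ha, enn_ereal_eq hb, ← EReal.coe_sub] at h
    exact EReal.coe_ne_bot _ h
  rw [enn_ereal_eq ha, enn_ereal_eq hb, enn_ereal_eq hp, enn_ereal_eq hn, ← EReal.coe_sub,
    ← EReal.coe_sub, EReal.coe_le_coe_iff] at h
  have h1 : (a + n).toReal = a.toReal + n.toReal := ENNReal.toReal_add ha hn
  have h2 : (p + b).toReal = p.toReal + b.toReal := ENNReal.toReal_add hp hb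
  rw [← ENNReal.toReal_le_toReal (by simp [ha, hn]) (by simp [hp, hb]), h1, h2]
  linarith

lemma er_main {a A B b : ℝ≥0∞} (ha : a ≠ ⊤) (hB : B ≠ ⊤) (h : a + b ≤ A + B) :
    (a : EReal) - (A : EReal) ≤ (B : EReal) - (b : EReal) := by
  by_cases hA : A = ⊤
  · rw [hA, EReal.coe_ennreal_top, EReal.sub_top]; exact bot_le
  have hb : b ≠ ⊤ := by
    intro hbt; rw [hbt, add_top] at h
    exact (ENNReal.add_ne_top.2 ⟨hA, hB⟩) (top_le_iff.1 h)
  rw [enn_ereal_eq ha, enn_ereal_eq hb, enn_ereal_eq hA, enn_ereal_eq hB, ← EReal.coe_sub,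
    ← EReal.coe_sub, EReal.coe_le_coe_iff]
  rw [← ENNReal.toReal_le_toReal (by simp [ha, hb]) (by simp [hA, hB]),
    ENNReal.toReal_add ha hb, ENNReal.toReal_add hA hB] at h
  linarith

lemma sbhOn_mono {d : ℕ} {u : Euc d → EReal} {O O' : Set (Euc d)} (hu : SbhOn u O)
    (h : O' ⊆ O) : SbhOn u O' :=
  ⟨hu.1.mono h, fun x hx => hu.2.1 x (h hx),
    fun x ρ hρ hb => hu.2.2 x ρ hρ (hb.trans h)⟩

lemma sublevel_open {d : ℕ} {u : Euc d → EReal} {O : Set (Euc d)} (hO : IsOpen O)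
    (husc : UpperSemicontinuousOn u O) (c : EReal) :
    IsOpen {z | z ∈ O ∧ u z < c} := by
  rw [isOpen_iff_mem_nhds]
  rintro z ⟨hzO, hzc⟩
  have h1 : ∀ᶠ w in 𝓝[O] z, u w < c := husc z hzO c hzc
  rw [nhdsWithin_eq_nhds.2 (hO.mem_nhds hzO)] at h1
  filter_upwards [h1, hO.mem_nhds hzO] with w h1 h2 using ⟨h2, h1⟩

lemma exists_usc_bound {d : ℕ} {u : Euc d → EReal} {O K : Set (Euc d)} (hO : IsOpen O)
    (husc : UpperSemicontinuousOn u O) (hlt : ∀ x ∈ O, u x < ⊤)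
    (hK : IsCompact K) (hKO : K ⊆ O) :
    ∃ M : ℝ, 0 ≤ M ∧ ∀ z ∈ K, u z ≤ (M : EReal) := by
  set V : ℕ → Set (Euc d) := fun n => {z | z ∈ O ∧ u z < ((n : ℝ) : EReal)} with hV
  have hVopen : ∀ n, IsOpen (V n) := fun n => sublevel_open hO husc _
  have hcover : K ⊆ ⋃ n, V n := by
    intro z hz
    have hzO := hKO hz
    obtain ⟨c, hc1, -⟩ := EReal.exists_between_coe_real (hlt z hzO)
    obtain ⟨n, hn⟩ := exists_nat_gt c
    exact mem_iUnion.2 ⟨n, hzO, hc1.trans (by exact_mod_cast hn)⟩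
  obtain ⟨t, ht⟩ := hK.elim_finite_subcover V hVopen hcover
  refine ⟨((t.sup id : ℕ) : ℝ), Nat.cast_nonneg _, fun z hz => ?_⟩
  obtain ⟨n, hn, hzn⟩ := mem_iUnion₂.1 (ht hz)
  refine hzn.2.le.trans ?_
  exact_mod_cast Nat.cast_le.2 (Finset.le_sup (f := id) hn)

open scoped Classical in
lemma measurable_trunc {d : ℕ} {u : Euc d → EReal} {U : Set (Euc d)} (hU : IsOpen U)
    (husc : UpperSemicontinuousOn u U) :
    Measurable (fun z => if z ∈ U then u z else (⊥ : EReal)) := by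
  apply measurable_of_Iio
  intro c
  have heq : (fun z => if z ∈ U then u z else (⊥ : EReal)) ⁻¹' Iio c =
      {z | z ∈ U ∧ u z < c} ∪ (if (⊥ : EReal) < c then Uᶜ else ∅) := by
    ext z
    by_cases hz : z ∈ U <;> split_ifs with hbc <;> simp [hz, hbc]
  rw [heq]
  refine ((sublevel_open hU husc c).measurableSet).union ?_
  split_ifs
  exacts [hU.isClosed_compl.measurableSet, MeasurableSet.empty]

lemma conv_lintegral {d : ℕ} (ϑ ω μc : Measure (Euc d)) [SFinite ϑ] {S : Set (Euc d)}
    (hμc : ∀ B : Set (Euc d), MeasurableSet B →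
      μc B = ∫⁻ x in S, ϑ ((fun y => x + y) ⁻¹' B) ∂ω)
    {f : Euc d → ℝ≥0∞} (hf : Measurable f) :
    ∫⁻ z, f z ∂μc = ∫⁻ x in S, ∫⁻ y, f (x + y) ∂ϑ ∂ω := by
  set m : Euc d → Measure (Euc d) := fun x => Measure.map (fun y => x + y) ϑ with hm
  have hmmeas : Measurable m := by
    apply Measure.measurable_of_measurable_coe
    intro s hs
    simp only [hm]
    simp_rw [Measure.map_apply (measurable_const_add _) hs]
    have key : (fun x : Euc d => ϑ ((fun y => x + y) ⁻¹' s)) =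
        fun x => ∫⁻ y, s.indicator (fun _ => (1 : ℝ≥0∞)) (x + y) ∂ϑ := by
      funext x
      rw [← lintegral_indicator_one (hs.preimage (measurable_const_add x))]
      exact lintegral_congr fun y => by by_cases h : x + y ∈ s <;> simp [Set.indicator_apply, h]
    rw [key]
    exact Measurable.lintegral_prod_right' ((measurable_one.indicator hs).comp measurable_add)
  have hμceq : μc = Measure.bind (ω.restrict S) m := by
    ext B hB
    rw [hμc B hB, Measure.bind_apply hB hmmeas.aemeasurable]
    exact lintegral_congr fun x => (Measure.map_apply (measurable_const_add x) hB).symm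
  rw [hμceq, Measure.lintegral_bind hmmeas.aemeasurable hf.aemeasurable]
  exact lintegral_congr fun x => lintegral_map hf (measurable_const_add x)

lemma my_preimage_cb {d : ℕ} (x w : Euc d) (ρ : ℝ) :
    (fun z : Euc d => z + x) ⁻¹' closedBall w ρ = closedBall (w - x) ρ := by
  rw [show (fun z : Euc d => z + x) = (fun z : Euc d => x + z) from funext fun z => add_comm z x,
    preimage_add_closedBall w x ρ]

lemma average_translate {d : ℕ} (h : Euc d → ℝ) (x w : Euc d) (ρ : ℝ) :
    ⨍ y in closedBall w ρ, h (y - x) ∂volume = ⨍ y in closedBall (w - x) ρ, h y ∂volume := by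
  have mp : MeasurePreserving (fun z : Euc d => z + x) volume volume :=
    measurePreserving_add_right volume x
  have emb : MeasurableEmbedding (fun z : Euc d => z + x) :=
    (Homeomorph.addRight x).measurableEmbedding
  have hpre := my_preimage_cb x w ρ
  have hint := mp.setIntegral_preimage_emb emb (fun y => h (y - x)) (closedBall w ρ)
  rw [hpre] at hint
  simp only [add_sub_cancel_right] at hint
  have hmeas : volume (closedBall w ρ) = volume (closedBall (w - x) ρ) := by
    rw [← hpre, mp.measure_preimage measurableSet_closedBall.nullMeasurableSet]
  rw [setAverage_eq, setAverage_eq, measureReal_def, measureReal_def, hmeas, hint]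

lemma dist_shift {d : ℕ} (w x z : Euc d) : dist (w - x) z = dist w (x + z) := by
  rw [dist_eq_norm, dist_eq_norm]
  congr 1
  abel

lemma sbhOn_translate {d : ℕ} {u : Euc d → EReal} {O : Set (Euc d)} (hu : SbhOn u O)
    (x : Euc d) : SbhOn (fun y => u (x + y)) ((fun y => x + y) ⁻¹' O) := by
  obtain ⟨husc, hlt, hsub⟩ := hu
  refine ⟨?_, fun y hy => hlt _ hy, ?_⟩
  · intro y hy c hc
    have hT : Tendsto (fun y : Euc d => x + y) (𝓝[(fun y : Euc d => x + y) ⁻¹' O] y)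
        (𝓝[O] (x + y)) :=
      ((continuous_add_left x).continuousWithinAt).tendsto_nhdsWithin (mapsTo_preimage _ _)
    exact hT.eventually (husc (x + y) hy c hc)
  · intro z ρ hρ hball h hc hh hsph y hy
    have hmem : ∀ w : Euc d, w ∈ closedBall (x + z) ρ ↔ w - x ∈ closedBall z ρ := by
      intro w; rw [mem_closedBall, mem_closedBall, dist_shift]
    have hmemb : ∀ w : Euc d, w ∈ ball (x + z) ρ ↔ w - x ∈ ball z ρ := by
      intro w; rw [mem_ball, mem_ball, dist_shift]
    have hmems : ∀ w : Euc d, w ∈ sphere (x + z) ρ ↔ w - x ∈ sphere z ρ := by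
      intro w; rw [mem_sphere, mem_sphere, dist_shift]
    have hball' : closedBall (x + z) ρ ⊆ O := by
      intro w hw
      have h1 : w - x ∈ closedBall z ρ := (hmem w).1 hw
      have h2 := hball h1
      simpa using h2
    set h' : Euc d → ℝ := fun w => h (w - x) with hh'def
    have hcsub : Continuous (fun w : Euc d => w - x) := continuous_id.sub continuous_const
    have hc' : ContinuousOn h' (closedBall (x + z) ρ) :=
      hc.comp hcsub.continuousOn (fun w hw => (hmem w).1 hw)
    have hcb' : ContinuousOn h' (ball (x + z) ρ) :=
      hh.1.comp hcsub.continuousOn (fun w hw => (hmemb w).1 hw)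
    have hh' : HarmOn h' (ball (x + z) ρ) := by
      refine ⟨hcb', fun w ρ' hρ' hsb => ?_⟩
      have hsb2 : closedBall (w - x) ρ' ⊆ ball z ρ := by
        intro v hv
        have hd : dist (v + x) w = dist v (w - x) := by
          rw [dist_eq_norm, dist_eq_norm]; congr 1; abel
        have h1 : v + x ∈ closedBall w ρ' := by
          rw [mem_closedBall, hd]; exact hv
        have h2 := (hmemb _).1 (hsb h1)
        simpa using h2
      have h1 : h (w - x) = ⨍ y in closedBall (w - x) ρ', h y ∂volume :=
        hh.2 (w - x) ρ' hρ' hsb2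
      calc h' w = h (w - x) := rfl
        _ = ⨍ y in closedBall (w - x) ρ', h y ∂volume := h1
        _ = ⨍ y in closedBall w ρ', h (y - x) ∂volume := (average_translate h x w ρ').symm
        _ = ⨍ y in closedBall w ρ', h' y ∂volume := rfl
    have hsph' : ∀ w ∈ sphere (x + z) ρ, u w ≤ (h' w : EReal) := by
      intro w hw
      have h1 : w - x ∈ sphere z ρ := (hmems w).1 hw
      have := hsph (w - x) h1
      simpa [hh'def] using this
    have hres := hsub (x + z) ρ hρ hball' h' hc' hh' hsph' (x + y)
      ((hmem _).2 (by simpa using hy))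
    simpa [hh'def] using hres

/-- Let `ϑ` be a Jensen measure on the ball `r𝔹` at `0`, i.e. a positive
measure with compact support in `r𝔹` such that `u 0 ≤ ∫ u dϑ` for every `u` subharmonic
on `r𝔹`. Let `ω` be a finite positive measure with compact support `S = supp ω` in the open
set `O`, with `⋃_{x ∈ S} B(x,r)` relatively compact in `O`. Then the convolution `ω ∗ ϑ`,
determined by `B ↦ ∫_S ϑ(B - x) dω(x)`, is an `sbh(O)`-balayage of `ω`. -/
theorem stmt_13 {d : ℕ} (O : Set (Euc d)) (hO : IsOpen O) (hOne : O.Nonempty)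
    (r : ℝ) (hr : 0 < r)
    (ϑ : Measure (Euc d)) (hϑ : MeasCompIn ϑ (ball (0 : Euc d) r))
    (hJ : ∀ u : Euc d → EReal, SbhOn u (ball (0 : Euc d) r) → u 0 ≤ eInt ϑ u)
    (ω : Measure (Euc d)) (hω : MeasCompIn ω O)
    (hUr : IsCompact (closure (⋃ x ∈ msupp ω, ball x r)) ∧
      closure (⋃ x ∈ msupp ω, ball x r) ⊆ O)
    (μc : Measure (Euc d))
    (hμc : ∀ B : Set (Euc d), MeasurableSet B →
      μc B = ∫⁻ x in msupp ω, ϑ ((fun y => x + y) ⁻¹' B) ∂ω) :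
    ∀ u : Euc d → EReal, SbhOn u O → eInt ω u ≤ eInt μc u := by
  
  intro u hu
  classical
  obtain ⟨hScomp, hSO, hSnull, hωfin⟩ := hω
  obtain ⟨hTcomp, hTsub, hTnull, hϑfin⟩ := hϑ
  haveI : IsFiniteMeasure ϑ := ⟨hϑfin⟩
  set S := msupp ω with hSdef
  set U : Set (Euc d) := ⋃ x ∈ S, ball x r with hUdef
  have hUopen : IsOpen U := isOpen_biUnion fun x _ => isOpen_ball
  have hUO : U ⊆ O := subset_closure.trans hUr.2
  have hSU : S ⊆ U := fun x hx => mem_biUnion hx (mem_ball_self hr)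
  obtain ⟨M, hM0, hMb⟩ := exists_usc_bound hO hu.1 hu.2.1 hUr.1 hUr.2
  have hMbU : ∀ z ∈ U, u z ≤ (M : EReal) := fun z hz => hMb z (subset_closure hz)
  set g : Euc d → EReal := fun z => if z ∈ U then u z else ⊥ with hgdef
  have hgu : ∀ z ∈ U, g z = u z := fun z hz => if_pos hz
  have hgmeas : Measurable g := measurable_trunc hUopen (hu.1.mono hUO)
  have hgle : ∀ z, g z ≤ (M : EReal) := by
    intro z
    by_cases hz : z ∈ U
    · rw [hgu z hz]; exact hMbU z hz
    · simp only [hgdef, if_neg hz]; exact bot_le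
  have hgneT : ∀ z, g z ≠ ⊤ := by
    intro z hzt
    have := hgle z
    rw [hzt] at this
    simp at this
  set fa : Euc d → ℝ≥0∞ := fun z => erealPos (g z) with hfa
  set fb : Euc d → ℝ≥0∞ := fun z => erealPos (-(g z)) with hfb
  have hfameas : Measurable fa := measurable_erealPos.comp hgmeas
  have hfbmeas : Measurable fb := measurable_erealPos.comp hgmeas.neg
  have hfabd : ∀ z, fa z ≤ ENNReal.ofReal M := fun z => erealPos_le_ofReal hM0 (hgle z)
  have hfane : ∀ z, fa z ≠ ⊤ := fun z =>
    ne_top_of_le_ne_top ENNReal.ofReal_ne_top (hfabd z)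
  have hSmeas : MeasurableSet S := hScomp.isClosed.measurableSet
  have haeω : ∀ᵐ x ∂ω, x ∈ S := mem_ae_iff.2 hSnull
  have haeϑ : ∀ᵐ y ∂ϑ, y ∈ msupp ϑ := mem_ae_iff.2 hTnull
  have hballU : ∀ x ∈ S, ∀ y ∈ ball (0 : Euc d) r, x + y ∈ U := by
    intro x hx y hy
    have h2 : x + y ∈ ball x r := by
      rw [mem_ball] at hy ⊢
      rw [dist_eq_norm, add_sub_cancel_left, ← dist_zero_right]
      exact hy
    exact mem_biUnion hx h2
  have hμcU : μc Uᶜ = 0 := by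
    rw [hμc Uᶜ hUopen.isClosed_compl.measurableSet]
    have hz : ∀ x ∈ S, ϑ ((fun y => x + y) ⁻¹' Uᶜ) = 0 := by
      intro x hx
      have hsub2 : (fun y => x + y) ⁻¹' Uᶜ ⊆ (msupp ϑ)ᶜ := by
        intro y hy hyT
        exact hy (hballU x hx y (hTsub hyT))
      exact le_antisymm ((measure_mono hsub2).trans hTnull.le) zero_le
    calc (∫⁻ x in S, ϑ ((fun y => x + y) ⁻¹' Uᶜ) ∂ω)
        = ∫⁻ _ in S, 0 ∂ω := setLIntegral_congr_fun hSmeas hz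
      _ = 0 := lintegral_zero
  have haeμc : ∀ᵐ z ∂μc, z ∈ U := mem_ae_iff.2 hμcU
  -- replace u by g in both integrals
  have hEω : eInt ω u = ((∫⁻ z, fa z ∂ω : ℝ≥0∞) : EReal) - ((∫⁻ z, fb z ∂ω : ℝ≥0∞) : EReal) := by
    unfold eInt
    rw [lintegral_congr_ae (haeω.mono fun x hx =>
        (congrArg erealPos (hgu x (hSU hx))).symm),
      lintegral_congr_ae (haeω.mono fun x hx =>
        (congrArg (fun w => erealPos (-w)) (hgu x (hSU hx))).symm)]
  have hEμc : eInt μc u =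
      ((∫⁻ z, fa z ∂μc : ℝ≥0∞) : EReal) - ((∫⁻ z, fb z ∂μc : ℝ≥0∞) : EReal) := by
    unfold eInt
    rw [lintegral_congr_ae (haeμc.mono fun z hz =>
        (congrArg erealPos (hgu z hz)).symm),
      lintegral_congr_ae (haeμc.mono fun z hz =>
        (congrArg (fun w => erealPos (-w)) (hgu z hz)).symm)]
  -- Fubini for the convolution
  set P : Euc d → ℝ≥0∞ := fun x => ∫⁻ y, fa (x + y) ∂ϑ with hP
  set N : Euc d → ℝ≥0∞ := fun x => ∫⁻ y, fb (x + y) ∂ϑ with hN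
  have hPmeas : Measurable P :=
    Measurable.lintegral_prod_right' (hfameas.comp measurable_add)
  have hNmeas : Measurable N :=
    Measurable.lintegral_prod_right' (hfbmeas.comp measurable_add)
  have hres : ω.restrict S = ω := Measure.restrict_eq_self_of_ae_mem haeω
  have hB1 : ∫⁻ z, fa z ∂μc = ∫⁻ x, P x ∂ω := by
    rw [conv_lintegral ϑ ω μc hμc hfameas, hres]
  have hB2 : ∫⁻ z, fb z ∂μc = ∫⁻ x, N x ∂ω := by
    rw [conv_lintegral ϑ ω μc hμc hfbmeas, hres]
  -- finiteness
  have hfaint : ∫⁻ z, fa z ∂ω ≠ ⊤ := by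
    have hb : ∫⁻ z, fa z ∂ω ≤ ENNReal.ofReal M * ω univ := by
      calc ∫⁻ z, fa z ∂ω ≤ ∫⁻ _, ENNReal.ofReal M ∂ω := lintegral_mono hfabd
        _ = ENNReal.ofReal M * ω univ := lintegral_const _
    exact ne_top_of_le_ne_top
      (ENNReal.mul_ne_top ENNReal.ofReal_ne_top hωfin.ne) hb
  have hPbd : ∀ x, P x ≤ ENNReal.ofReal M * ϑ univ := by
    intro x
    calc P x ≤ ∫⁻ _, ENNReal.ofReal M ∂ϑ := lintegral_mono fun y => hfabd _
      _ = ENNReal.ofReal M * ϑ univ := lintegral_const _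
  have hCne : ENNReal.ofReal M * ϑ univ ≠ ⊤ :=
    ENNReal.mul_ne_top ENNReal.ofReal_ne_top hϑfin.ne
  have hPne : ∀ x, P x ≠ ⊤ := fun x => ne_top_of_le_ne_top hCne (hPbd x)
  have hB1ne : ∫⁻ x, P x ∂ω ≠ ⊤ := by
    have hb : ∫⁻ x, P x ∂ω ≤ ENNReal.ofReal M * ϑ univ * ω univ := by
      calc ∫⁻ x, P x ∂ω ≤ ∫⁻ _, ENNReal.ofReal M * ϑ univ ∂ω := lintegral_mono hPbd
        _ = ENNReal.ofReal M * ϑ univ * ω univ := lintegral_const _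
    exact ne_top_of_le_ne_top (ENNReal.mul_ne_top hCne hωfin.ne) hb
  -- the pointwise Jensen inequality
  have hpt : ∀ x ∈ S, fa x + N x ≤ P x + fb x := by
    intro x hx
    have hxU : x ∈ U := hSU hx
    have hsbh : SbhOn (fun y => u (x + y)) (ball (0 : Euc d) r) := by
      refine sbhOn_mono (sbhOn_translate hu x) ?_
      intro y hy
      exact mem_preimage.2 (hUO (hballU x hx y hy))
    have hkey := hJ _ hsbh
    have hEϑ : eInt ϑ (fun y => u (x + y)) = ((P x : ℝ≥0∞) : EReal) - (N x : EReal) := by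
      unfold eInt
      rw [lintegral_congr_ae (haeϑ.mono fun y hy =>
          (congrArg erealPos (hgu _ (hballU x hx y (hTsub hy)))).symm),
        lintegral_congr_ae (haeϑ.mono fun y hy =>
          (congrArg (fun w => erealPos (-w)) (hgu _ (hballU x hx y (hTsub hy)))).symm)]
    rw [hEϑ] at hkey
    simp only [add_zero] at hkey
    have hdecomp : ((fa x : ℝ≥0∞) : EReal) - (fb x : EReal) = g x :=
      erealPos_sub_erealPos_neg (hgneT x)
    have hle : ((fa x : ℝ≥0∞) : EReal) - (fb x : EReal) ≤ ((P x : ℝ≥0∞) : EReal) - N x := by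
      rw [hdecomp, hgu x hxU]; exact hkey
    exact er_ineq (hfane x) (hPne x) hle
  -- integrate the pointwise inequality
  have hint : ∫⁻ x, (fa x + N x) ∂ω ≤ ∫⁻ x, (P x + fb x) ∂ω :=
    lintegral_mono_ae (haeω.mono fun x hx => hpt x hx)
  rw [lintegral_add_left hfameas, lintegral_add_left hPmeas] at hint
  rw [hEω, hEμc, hB1, hB2]
  exact er_main hfaint hB1ne (by rw [add_comm (∫⁻ z, fb z ∂ω)]; exact hint)
end
end
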